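/- arXiv:1705.04484 — 6 statements merged into one kernel-verified Lean document; each statement's English description precedes it below -/
import Mathlib

section
/- Let G be a finite graph with symmetric edge weights and Ω a finite subset of vertices with at least two boundary vertices. Then λ_1(Ω) ≥ (1/8) ζ_1(Ω̃)², where λ_1(Ω) is the first nontrivial eigenvalue of the Dirichlet-to-Neumann operator on δΩ and ζ_1(Ω̃) is the first nontrivial eigenvalue of the normalized graph Laplacian on the graph Ω̃ (with no boundary condition). -/
open scoped Classical
open Finset

variable {V : Type*} [Fintype V]

/-- The vertex boundary δΩ of a finite set Ω of vertices. -/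
noncomputable def bdry (μ : V → V → ℝ) (Ω : Finset V) : Finset V :=
  Finset.univ.filter fun x => x ∉ Ω ∧ ∃ y ∈ Ω, 0 < μ x y

/-- Ω̄ = Ω ∪ δΩ. -/
noncomputable def clos (μ : V → V → ℝ) (Ω : Finset V) : Finset V :=
  Ω ∪ bdry μ Ω

/-- The vertex measure m on Ω̄. -/
noncomputable def vm (μ : V → V → ℝ) (Ω : Finset V) (x : V) : ℝ :=
  if x ∈ Ω then ∑ y, μ x y else ∑ y ∈ Ω, μ x y

/-- m(B) = Σ_{x ∈ B} m_x. -/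
noncomputable def msum (μ : V → V → ℝ) (Ω : Finset V) (B : Finset V) : ℝ :=
  ∑ x ∈ B, vm μ Ω x

/-- Sum over the edges e = {x,y} of E(Ω,Ω̄) of μ_{xy} · F x y (for symmetric F). -/
noncomputable def edgeSum (μ : V → V → ℝ) (Ω : Finset V) (F : V → V → ℝ) : ℝ :=
  (∑ x ∈ Ω, ∑ y ∈ Ω, μ x y * F x y) / 2 +
    ∑ x ∈ Ω, ∑ y ∈ bdry μ Ω, μ x y * F x y

/-- Dirichlet energy D_Ω(f). -/
noncomputable def dirichlet (μ : V → V → ℝ) (Ω : Finset V) (f : V → ℝ) : ℝ :=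
  edgeSum μ Ω fun x y => (f x - f y) ^ 2

/-- Dirichlet form D_Ω(f,g). -/
noncomputable def dform (μ : V → V → ℝ) (Ω : Finset V) (f g : V → ℝ) : ℝ :=
  edgeSum μ Ω fun x y => (f x - f y) * (g x - g y)

/-- μ(∂_Ω A): total weight of the edges of E(Ω,Ω̄) with exactly one endpoint in A. -/
noncomputable def cut (μ : V → V → ℝ) (Ω : Finset V) (A : Finset V) : ℝ :=
  edgeSum μ Ω fun x y => if (x ∈ A) ↔ (y ∈ A) then 0 else 1

/-- The graph Laplacian Δf(x) (used for x ∈ Ω). -/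
noncomputable def lap (μ : V → V → ℝ) (Ω : Finset V) (f : V → ℝ) (x : V) : ℝ :=
  (∑ y, μ x y * (f y - f x)) / vm μ Ω x

/-- The outward normal derivative ∂f/∂n(z) (used for z ∈ δΩ). -/
noncomputable def nderiv (μ : V → V → ℝ) (Ω : Finset V) (f : V → ℝ) (z : V) : ℝ :=
  (∑ x ∈ Ω, μ z x * (f z - f x)) / vm μ Ω z

/-- f is harmonic on Ω. -/
def IsHarmonic (μ : V → V → ℝ) (Ω : Finset V) (u : V → ℝ) : Prop :=
  ∀ x ∈ Ω, lap μ Ω u x = 0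

/-- Adjacency in the graph Ω̃ = (Ω̄, E(Ω,Ω̄)). -/
def tilAdj (μ : V → V → ℝ) (Ω : Finset V) (x y : V) : Prop :=
  0 < μ x y ∧ (x ∈ Ω ∨ y ∈ Ω)

/-- The graph Ω̃ is connected. -/
def TilConnected (μ : V → V → ℝ) (Ω : Finset V) : Prop :=
  ∀ x ∈ clos μ Ω, ∀ y ∈ clos μ Ω, Relation.ReflTransGen (tilAdj μ Ω) x y

/-- λ₁(Ω): the first nontrivial eigenvalue of the Dirichlet-to-Neumann operator,
characterized by its Rayleigh quotient. -/
noncomputable def lambda1 (μ : V → V → ℝ) (Ω : Finset V) : ℝ :=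
  sInf { r : ℝ | ∃ u : V → ℝ, IsHarmonic μ Ω u ∧
    (∑ x ∈ bdry μ Ω, u x ^ 2 * vm μ Ω x) = 1 ∧
    (∑ x ∈ bdry μ Ω, u x * vm μ Ω x) = 0 ∧
    r = dirichlet μ Ω u }

/-- The Escobar-type Cheeger constant h_E(Ω̃). -/
noncomputable def hE (μ : V → V → ℝ) (Ω : Finset V) : ℝ :=
  sInf { r : ℝ | ∃ A : Finset V, A ⊆ clos μ Ω ∧
    0 < msum μ Ω (A ∩ bdry μ Ω) ∧
    msum μ Ω (A ∩ bdry μ Ω) ≤ msum μ Ω (bdry μ Ω) / 2 ∧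
    r = cut μ Ω A / msum μ Ω (A ∩ bdry μ Ω) }

/-- The Jammes-type Cheeger constant h_J(Ω̃). -/
noncomputable def hJ (μ : V → V → ℝ) (Ω : Finset V) : ℝ :=
  sInf { r : ℝ | ∃ A : Finset V, A ⊆ clos μ Ω ∧
    (A ∩ bdry μ Ω).Nonempty ∧
    msum μ Ω A ≤ msum μ Ω (clos μ Ω) / 2 ∧
    r = cut μ Ω A / msum μ Ω (A ∩ bdry μ Ω) }

/-- The classical Cheeger constant h(Ω̃). -/
noncomputable def cheeger (μ : V → V → ℝ) (Ω : Finset V) : ℝ :=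
  sInf { r : ℝ | ∃ A : Finset V, A ⊆ clos μ Ω ∧ A.Nonempty ∧
    msum μ Ω A ≤ msum μ Ω (clos μ Ω) / 2 ∧
    r = cut μ Ω A / msum μ Ω A }

/-- ζ₁(Ω̃): the first nontrivial eigenvalue of the normalized Laplacian of Ω̃
(no boundary condition), via its Rayleigh quotient. -/
noncomputable def zeta1 (μ : V → V → ℝ) (Ω : Finset V) : ℝ :=
  sInf { r : ℝ | ∃ f : V → ℝ, (∃ x ∈ clos μ Ω, f x ≠ 0) ∧
    (∑ x ∈ clos μ Ω, f x * vm μ Ω x) = 0 ∧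
    r = dirichlet μ Ω f / ∑ x ∈ clos μ Ω, f x ^ 2 * vm μ Ω x }

/-! ### Auxiliary lemmas -/

lemma aux_vm_nonneg (μ : V → V → ℝ) (Ω : Finset V) (hnn : ∀ x y, 0 ≤ μ x y) (x : V) :
    0 ≤ vm μ Ω x := by
  unfold vm; split <;> exact Finset.sum_nonneg fun y _ => hnn x y

lemma aux_mem_bdry {μ : V → V → ℝ} {Ω : Finset V} {x : V} :
    x ∈ bdry μ Ω ↔ x ∉ Ω ∧ ∃ y ∈ Ω, 0 < μ x y := by
  simp [bdry]

lemma aux_vm_pos_bdry (μ : V → V → ℝ) (Ω : Finset V) (hnn : ∀ x y, 0 ≤ μ x y)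
    {x : V} (hx : x ∈ bdry μ Ω) : 0 < vm μ Ω x := by
  obtain ⟨hxΩ, y, hy, hμ⟩ := aux_mem_bdry.mp hx
  rw [vm, if_neg hxΩ]
  exact Finset.sum_pos' (fun z _ => hnn x z) ⟨y, hy, hμ⟩

lemma aux_vm_pos_clos (μ : V → V → ℝ) (Ω : Finset V) (hnn : ∀ x y, 0 ≤ μ x y)
    (hconn : TilConnected μ Ω) (hne : (bdry μ Ω).Nonempty)
    {x : V} (hx : x ∈ clos μ Ω) : 0 < vm μ Ω x := by
  rw [clos, Finset.mem_union] at hx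
  rcases hx with hxΩ | hxb
  · obtain ⟨z, hz⟩ := hne
    have hxz : x ≠ z := fun h => (aux_mem_bdry.mp hz).1 (h ▸ hxΩ)
    have hpath := hconn x (by rw [clos, Finset.mem_union]; exact Or.inl hxΩ)
      z (by rw [clos, Finset.mem_union]; exact Or.inr hz)
    rcases Relation.ReflTransGen.cases_head hpath with h | ⟨w, ⟨hμw, -⟩, -⟩
    · exact absurd h hxz
    · rw [vm, if_pos hxΩ]
      exact Finset.sum_pos' (fun z _ => hnn x z) ⟨w, Finset.mem_univ w, hμw⟩
  · exact aux_vm_pos_bdry μ Ω hnn hxb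

lemma aux_disj (μ : V → V → ℝ) (Ω : Finset V) : Disjoint Ω (bdry μ Ω) :=
  Finset.disjoint_left.mpr fun _ hx hxb => (aux_mem_bdry.mp hxb).1 hx

lemma aux_dirichlet_nonneg (μ : V → V → ℝ) (Ω : Finset V) (hnn : ∀ x y, 0 ≤ μ x y)
    (f : V → ℝ) : 0 ≤ dirichlet μ Ω f := by
  rw [dirichlet, edgeSum]
  have h1 : (0:ℝ) ≤ ∑ x ∈ Ω, ∑ y ∈ Ω, μ x y * (f x - f y) ^ 2 :=
    Finset.sum_nonneg fun x _ => Finset.sum_nonneg fun y _ =>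
      mul_nonneg (hnn x y) (sq_nonneg _)
  have h2 : (0:ℝ) ≤ ∑ x ∈ Ω, ∑ y ∈ bdry μ Ω, μ x y * (f x - f y) ^ 2 :=
    Finset.sum_nonneg fun x _ => Finset.sum_nonneg fun y _ =>
      mul_nonneg (hnn x y) (sq_nonneg _)
  positivity

lemma aux_dirichlet_shift (μ : V → V → ℝ) (Ω : Finset V) (f : V → ℝ) (c : ℝ) :
    dirichlet μ Ω (fun x => f x - c) = dirichlet μ Ω f := by
  have h : ∀ x y : V, (f x - c - (f y - c)) ^ 2 = (f x - f y) ^ 2 := fun x y => by ring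
  simp only [dirichlet, edgeSum, h]

lemma aux_dirichlet_le (μ : V → V → ℝ) (Ω : Finset V)
    (hsym : ∀ x y, μ x y = μ y x) (hnn : ∀ x y, 0 ≤ μ x y) (f : V → ℝ) :
    dirichlet μ Ω f ≤ 2 * ∑ x ∈ clos μ Ω, f x ^ 2 * vm μ Ω x := by
  have hdisj := aux_disj μ Ω
  rw [dirichlet, edgeSum, clos, Finset.sum_union hdisj]
  set SΩ : V → ℝ := fun x => ∑ y ∈ Ω, μ x y with hSΩ
  set Sb : V → ℝ := fun x => ∑ y ∈ bdry μ Ω, μ x y with hSb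
  have hA : ∑ x ∈ Ω, ∑ y ∈ Ω, μ x y * (f x - f y) ^ 2 ≤
      ∑ x ∈ Ω, (4 * f x ^ 2 * SΩ x) := by
    have step1 : ∑ x ∈ Ω, ∑ y ∈ Ω, μ x y * (f x - f y) ^ 2 ≤
        ∑ x ∈ Ω, ∑ y ∈ Ω, (μ x y * (2 * f x ^ 2) + μ x y * (2 * f y ^ 2)) := by
      refine Finset.sum_le_sum fun x _ => Finset.sum_le_sum fun y _ => ?_
      nlinarith [hnn x y, sq_nonneg (f x + f y)]
    have step2 : ∑ x ∈ Ω, ∑ y ∈ Ω, (μ x y * (2 * f x ^ 2) + μ x y * (2 * f y ^ 2)) =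
        ∑ x ∈ Ω, (4 * f x ^ 2 * SΩ x) := by
      rw [Finset.sum_congr rfl fun x _ => Finset.sum_add_distrib, Finset.sum_add_distrib]
      have hswap : ∑ x ∈ Ω, ∑ y ∈ Ω, μ x y * (2 * f y ^ 2) =
          ∑ x ∈ Ω, ∑ y ∈ Ω, μ x y * (2 * f x ^ 2) := by
        rw [Finset.sum_comm]
        exact Finset.sum_congr rfl fun x _ => Finset.sum_congr rfl fun y _ => by
          rw [hsym]
      rw [hswap, ← Finset.sum_add_distrib]
      refine Finset.sum_congr rfl fun x _ => ?_
      rw [← Finset.sum_add_distrib, hSΩ, Finset.mul_sum]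
      exact Finset.sum_congr rfl fun y _ => by ring
    exact step1.trans_eq step2
  have hB : ∑ x ∈ Ω, ∑ y ∈ bdry μ Ω, μ x y * (f x - f y) ^ 2 ≤
      ∑ x ∈ Ω, (2 * f x ^ 2 * Sb x) + ∑ y ∈ bdry μ Ω, (2 * f y ^ 2 * vm μ Ω y) := by
    have step1 : ∑ x ∈ Ω, ∑ y ∈ bdry μ Ω, μ x y * (f x - f y) ^ 2 ≤
        ∑ x ∈ Ω, ∑ y ∈ bdry μ Ω, (μ x y * (2 * f x ^ 2) + μ x y * (2 * f y ^ 2)) := by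
      refine Finset.sum_le_sum fun x _ => Finset.sum_le_sum fun y _ => ?_
      nlinarith [hnn x y, sq_nonneg (f x + f y)]
    have step2 : ∑ x ∈ Ω, ∑ y ∈ bdry μ Ω, (μ x y * (2 * f x ^ 2) + μ x y * (2 * f y ^ 2)) =
        ∑ x ∈ Ω, (2 * f x ^ 2 * Sb x) + ∑ y ∈ bdry μ Ω, (2 * f y ^ 2 * vm μ Ω y) := by
      rw [Finset.sum_congr rfl fun x _ => Finset.sum_add_distrib, Finset.sum_add_distrib]
      congr 1
      · refine Finset.sum_congr rfl fun x _ => ?_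
        rw [hSb, Finset.mul_sum]
        exact Finset.sum_congr rfl fun y _ => by ring
      · rw [Finset.sum_comm]
        refine Finset.sum_congr rfl fun y hy => ?_
        have hyΩ : y ∉ Ω := (aux_mem_bdry.mp hy).1
        rw [vm, if_neg hyΩ, Finset.mul_sum]
        exact Finset.sum_congr rfl fun x _ => by rw [hsym x y]; ring
    exact step1.trans_eq step2
  have hvmΩ : ∀ x ∈ Ω, SΩ x + Sb x ≤ vm μ Ω x := by
    intro x hx
    rw [vm, if_pos hx, hSΩ, hSb, ← Finset.sum_union hdisj]
    exact Finset.sum_le_sum_of_subset_of_nonneg (Finset.subset_univ _)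
      fun y _ _ => hnn x y
  have hcomb : (∑ x ∈ Ω, (4 * f x ^ 2 * SΩ x)) / 2 + ∑ x ∈ Ω, (2 * f x ^ 2 * Sb x) ≤
      2 * ∑ x ∈ Ω, f x ^ 2 * vm μ Ω x := by
    calc (∑ x ∈ Ω, (4 * f x ^ 2 * SΩ x)) / 2 + ∑ x ∈ Ω, (2 * f x ^ 2 * Sb x)
        = ∑ x ∈ Ω, (4 * f x ^ 2 * SΩ x / 2 + 2 * f x ^ 2 * Sb x) := by
          rw [Finset.sum_add_distrib, ← Finset.sum_div]
      _ ≤ ∑ x ∈ Ω, 2 * (f x ^ 2 * vm μ Ω x) := by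
          refine Finset.sum_le_sum fun x hx => ?_
          nlinarith [hvmΩ x hx, sq_nonneg (f x)]
      _ = 2 * ∑ x ∈ Ω, f x ^ 2 * vm μ Ω x := by rw [Finset.mul_sum]
  have h2b : ∑ y ∈ bdry μ Ω, (2 * f y ^ 2 * vm μ Ω y) =
      2 * ∑ x ∈ bdry μ Ω, f x ^ 2 * vm μ Ω x := by
    rw [Finset.mul_sum]; exact Finset.sum_congr rfl fun y _ => by ring
  linarith [hA, hB, hcomb, h2b]

/-- Extension by zero of a function on Ω. -/
noncomputable def auxExt (Ω : Finset V) (g : ↥Ω → ℝ) : V → ℝ :=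
  fun y => if h : y ∈ Ω then g ⟨y, h⟩ else 0

/-- The Dirichlet Laplacian as a linear map on functions on Ω. -/
noncomputable def auxL (μ : V → V → ℝ) (Ω : Finset V) : (↥Ω → ℝ) →ₗ[ℝ] (↥Ω → ℝ) where
  toFun g x := (∑ y : V, μ x.1 y * auxExt Ω g y) - (∑ y : V, μ x.1 y) * g x
  map_add' g h := by
    funext x
    have he : ∀ y, auxExt Ω (g + h) y = auxExt Ω g y + auxExt Ω h y := by
      intro y; unfold auxExt; split <;> simp
    simp only [he, mul_add, Finset.sum_add_distrib, Pi.add_apply]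
    ring
  map_smul' c g := by
    funext x
    have he : ∀ y, auxExt Ω (c • g) y = c * auxExt Ω g y := by
      intro y; unfold auxExt; split <;> simp
    simp only [he, Pi.smul_apply, smul_eq_mul, RingHom.id_apply]
    rw [show ∑ y : V, μ x.1 y * (c * auxExt Ω g y)
        = c * ∑ y : V, μ x.1 y * auxExt Ω g y by
      rw [Finset.mul_sum]; exact Finset.sum_congr rfl fun y _ => by ring]
    ring

lemma auxL_inj (μ : V → V → ℝ) (Ω : Finset V)
    (hsym : ∀ x y, μ x y = μ y x) (hnn : ∀ x y, 0 ≤ μ x y)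
    (hconn : TilConnected μ Ω) (hne : (bdry μ Ω).Nonempty) :
    Function.Injective (auxL μ Ω) := by
  have key : ∀ g : ↥Ω → ℝ, auxL μ Ω g = 0 → g = 0 := by
    intro g hg
    set f : V → ℝ := auxExt Ω g with hf
    have hf0 : ∀ y, y ∉ Ω → f y = 0 := fun y hy => dif_neg hy
    have hfg : ∀ x (hx : x ∈ Ω), f x = g ⟨x, hx⟩ := fun x hx => dif_pos hx
    have hharm : ∀ x ∈ Ω, (∑ y : V, μ x y * f y) - (∑ y : V, μ x y) * f x = 0 := by
      intro x hx
      have h1 := congrFun hg ⟨x, hx⟩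
      rw [hfg x hx]
      exact h1
    -- energy identity
    have hQ : ∑ x ∈ Ω, f x * ((∑ y : V, μ x y * f y) - (∑ y : V, μ x y) * f x) = 0 :=
      Finset.sum_eq_zero fun x hx => by rw [hharm x hx, mul_zero]
    have hsplit : ∀ x : V, (∑ y : V, μ x y * f y) - (∑ y : V, μ x y) * f x =
        (∑ y ∈ Ω, μ x y * f x * (f y - f x) + ∑ y ∈ Ωᶜ, μ x y * f x * (f y - f x)) / f x
        ∨ True := fun _ => Or.inr trivial
    have hinner : ∀ x : V, f x * ((∑ y : V, μ x y * f y) - (∑ y : V, μ x y) * f x) =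
        ∑ y ∈ Ω, μ x y * f x * (f y - f x) + ∑ y ∈ Ωᶜ, μ x y * f x * (f y - f x) := by
      intro x
      rw [Finset.sum_add_sum_compl]
      simp only [show ∀ y, μ x y * f x * (f y - f x) = f x * (μ x y * f y) - μ x y * (f x * f x)
        from fun y => by ring]
      rw [Finset.sum_sub_distrib, ← Finset.mul_sum, ← Finset.sum_mul]
      ring
    rw [Finset.sum_congr rfl fun x _ => hinner x, Finset.sum_add_distrib] at hQ
    set T1 := ∑ x ∈ Ω, ∑ y ∈ Ω, μ x y * f x * (f y - f x) with hT1def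
    set T2 := ∑ x ∈ Ω, ∑ y ∈ Ωᶜ, μ x y * f x * (f y - f x) with hT2def
    have hT2eq : T2 = -∑ x ∈ Ω, ∑ y ∈ Ωᶜ, μ x y * f x ^ 2 := by
      rw [hT2def, ← Finset.sum_neg_distrib]
      refine Finset.sum_congr rfl fun x _ => ?_
      rw [← Finset.sum_neg_distrib]
      refine Finset.sum_congr rfl fun y hy => ?_
      rw [hf0 y (by simpa using hy)]
      ring
    have hT1eq : T1 = -(∑ x ∈ Ω, ∑ y ∈ Ω, μ x y * (f x - f y) ^ 2) / 2 := by
      have hswap : T1 = ∑ x ∈ Ω, ∑ y ∈ Ω, μ x y * f y * (f x - f y) := by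
        rw [hT1def, Finset.sum_comm]
        exact Finset.sum_congr rfl fun x _ => Finset.sum_congr rfl fun y _ => by
          rw [hsym]
      have h2 : T1 + T1 = -(∑ x ∈ Ω, ∑ y ∈ Ω, μ x y * (f x - f y) ^ 2) := by
        nth_rewrite 2 [hswap]
        rw [hT1def, ← Finset.sum_add_distrib, ← Finset.sum_neg_distrib]
        refine Finset.sum_congr rfl fun x _ => ?_
        rw [← Finset.sum_add_distrib, ← Finset.sum_neg_distrib]
        exact Finset.sum_congr rfl fun y _ => by ring
      linarith
    have hAnn : (0:ℝ) ≤ ∑ x ∈ Ω, ∑ y ∈ Ω, μ x y * (f x - f y) ^ 2 :=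
      Finset.sum_nonneg fun x _ => Finset.sum_nonneg fun y _ =>
        mul_nonneg (hnn x y) (sq_nonneg _)
    have hBnn : (0:ℝ) ≤ ∑ x ∈ Ω, ∑ y ∈ Ωᶜ, μ x y * f x ^ 2 :=
      Finset.sum_nonneg fun x _ => Finset.sum_nonneg fun y _ =>
        mul_nonneg (hnn x y) (sq_nonneg _)
    have hA0 : ∑ x ∈ Ω, ∑ y ∈ Ω, μ x y * (f x - f y) ^ 2 = 0 := by
      rw [hT1eq, hT2eq] at hQ; linarith
    have hB0 : ∑ x ∈ Ω, ∑ y ∈ Ωᶜ, μ x y * f x ^ 2 = 0 := by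
      rw [hT1eq, hT2eq] at hQ; linarith
    have hApt : ∀ x ∈ Ω, ∀ y ∈ Ω, μ x y * (f x - f y) ^ 2 = 0 := by
      intro x hx y hy
      have h1 := (Finset.sum_eq_zero_iff_of_nonneg fun x _ =>
        Finset.sum_nonneg fun y _ => mul_nonneg (hnn x y) (sq_nonneg _)).mp hA0 x hx
      exact (Finset.sum_eq_zero_iff_of_nonneg fun y _ =>
        mul_nonneg (hnn x y) (sq_nonneg _)).mp h1 y hy
    have hBpt : ∀ x ∈ Ω, ∀ y, y ∉ Ω → μ x y * f x ^ 2 = 0 := by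
      intro x hx y hy
      have h1 := (Finset.sum_eq_zero_iff_of_nonneg fun x _ =>
        Finset.sum_nonneg fun y _ => mul_nonneg (hnn x y) (sq_nonneg _)).mp hB0 x hx
      exact (Finset.sum_eq_zero_iff_of_nonneg fun y _ =>
        mul_nonneg (hnn x y) (sq_nonneg _)).mp h1 y (by simpa using hy)
    have hedge : ∀ x y : V, tilAdj μ Ω x y → f x = f y := by
      rintro x y ⟨hμ, hxy⟩
      by_cases hx : x ∈ Ω <;> by_cases hy : y ∈ Ω
      · have := hApt x hx y hy
        have h2 : (f x - f y) ^ 2 = 0 := by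
          rcases mul_eq_zero.mp this with h | h
          · exact absurd h (ne_of_gt hμ)
          · exact h
        have := sq_eq_zero_iff.mp h2; linarith
      · have := hBpt x hx y hy
        have h2 : f x ^ 2 = 0 := by
          rcases mul_eq_zero.mp this with h | h
          · exact absurd h (ne_of_gt hμ)
          · exact h
        rw [sq_eq_zero_iff.mp h2, hf0 y hy]
      · have h0 := hBpt y hy x hx
        rw [hsym y x] at h0
        have h2 : f y ^ 2 = 0 := by
          rcases mul_eq_zero.mp h0 with h | h
          · exact absurd h (ne_of_gt hμ)
          · exact h
        rw [sq_eq_zero_iff.mp h2, hf0 x hx]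
      · rcases hxy with h | h
        · exact absurd h hx
        · exact absurd h hy
    have hpath : ∀ a b : V, Relation.ReflTransGen (tilAdj μ Ω) a b → f a = f b := by
      intro a b h
      induction h with
      | refl => rfl
      | tail _ hstep ih => exact ih.trans (hedge _ _ hstep)
    obtain ⟨z, hz⟩ := hne
    have hfz : f z = 0 := hf0 z (aux_mem_bdry.mp hz).1
    have hΩ0 : ∀ x ∈ Ω, f x = 0 := by
      intro x hx
      have h1 := hconn x (by rw [clos, Finset.mem_union]; exact Or.inl hx)
        z (by rw [clos, Finset.mem_union]; exact Or.inr hz)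
      rw [hpath x z h1, hfz]
    funext x
    have := hΩ0 x.1 x.2
    rw [hfg x.1 x.2] at this
    simpa using this
  intro g₁ g₂ h
  have h2 : auxL μ Ω (g₁ - g₂) = 0 := by rw [map_sub, h, sub_self]
  have := key _ h2
  exact sub_eq_zero.mp this

lemma aux_harm_ext (μ : V → V → ℝ) (Ω : Finset V)
    (hsym : ∀ x y, μ x y = μ y x) (hnn : ∀ x y, 0 ≤ μ x y)
    (hconn : TilConnected μ Ω) (hne : (bdry μ Ω).Nonempty)
    (φ : V → ℝ) (hφ : ∀ x ∈ Ω, φ x = 0) :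
    ∃ u : V → ℝ, IsHarmonic μ Ω u ∧ ∀ z, z ∉ Ω → u z = φ z := by
  have hsurj : Function.Surjective (auxL μ Ω) :=
    LinearMap.injective_iff_surjective.mp (auxL_inj μ Ω hsym hnn hconn hne)
  obtain ⟨g, hg⟩ := hsurj (fun x => -∑ y : V, μ x.1 y * φ y)
  refine ⟨fun y => auxExt Ω g y + φ y, ?_, fun z hz => by
    show auxExt Ω g z + φ z = φ z
    rw [auxExt, dif_neg hz, zero_add]⟩
  intro x hx
  rw [lap]
  have h1 : (∑ y : V, μ x y * auxExt Ω g y) - (∑ y : V, μ x y) * g ⟨x, hx⟩ =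
      -∑ y : V, μ x y * φ y := congrFun hg ⟨x, hx⟩
  have h2 : auxExt Ω g x = g ⟨x, hx⟩ := dif_pos hx
  have h3 : φ x = 0 := hφ x hx
  have hnum : ∑ y : V, μ x y * (auxExt Ω g y + φ y - (auxExt Ω g x + φ x)) = 0 := by
    have hexp : ∑ y : V, μ x y * (auxExt Ω g y + φ y - (auxExt Ω g x + φ x)) =
        (∑ y : V, μ x y * auxExt Ω g y) + (∑ y : V, μ x y * φ y) -
          (∑ y : V, μ x y) * (auxExt Ω g x + φ x) := by
      rw [Finset.sum_mul, ← Finset.sum_add_distrib, ← Finset.sum_sub_distrib]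
      exact Finset.sum_congr rfl fun y _ => by ring
    rw [hexp, h2, h3]
    linarith [h1]
  rw [hnum, zero_div]

/-- Corollary 1.7: λ₁(Ω) ≥ (1/8) ζ₁(Ω̃)². -/
theorem stmt_3 (μ : V → V → ℝ) (Ω : Finset V)
    (hsym : ∀ x y, μ x y = μ y x) (hnn : ∀ x y, 0 ≤ μ x y)
    (hconn : TilConnected μ Ω) (hcard : 2 ≤ (bdry μ Ω).card) :
    lambda1 μ Ω ≥ (1 / 8) * zeta1 μ Ω ^ 2 := by
  classical
  have hdisj := aux_disj μ Ω
  have hbne : (bdry μ Ω).Nonempty := Finset.card_pos.mp (by omega)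
  have hbclos : ∀ x ∈ bdry μ Ω, x ∈ clos μ Ω := fun x hx => by
    rw [clos, Finset.mem_union]; exact Or.inr hx
  have hvmb : ∀ x ∈ bdry μ Ω, 0 < vm μ Ω x := fun x hx => aux_vm_pos_bdry μ Ω hnn hx
  have hvmc : ∀ x ∈ clos μ Ω, 0 < vm μ Ω x := fun x hx =>
    aux_vm_pos_clos μ Ω hnn hconn hbne hx
  have hclos_sum : ∀ g : V → ℝ, ∑ x ∈ clos μ Ω, g x =
      ∑ x ∈ Ω, g x + ∑ x ∈ bdry μ Ω, g x := fun g => by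
    rw [clos, Finset.sum_union hdisj]
  -- construct a member of the lambda1 set
  obtain ⟨z₁, hz₁, z₂, hz₂, hzne⟩ := Finset.one_lt_card.mp
    (by omega : 1 < (bdry μ Ω).card)
  set m₁ := vm μ Ω z₁ with hm₁def
  set m₂ := vm μ Ω z₂ with hm₂def
  have hm₁ : 0 < m₁ := hvmb z₁ hz₁
  have hm₂ : 0 < m₂ := hvmb z₂ hz₂
  set a := Real.sqrt (m₂ / (m₁ * (m₁ + m₂))) with hadef
  set b := -(a * m₁) / m₂ with hbdef
  have ha2 : a ^ 2 = m₂ / (m₁ * (m₁ + m₂)) := Real.sq_sqrt (by positivity)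
  set φ : V → ℝ := fun x => if x = z₁ then a else if x = z₂ then b else 0 with hφdef
  have hφΩ : ∀ x ∈ Ω, φ x = 0 := by
    intro x hx
    have h1 : x ≠ z₁ := fun h => (aux_mem_bdry.mp hz₁).1 (h ▸ hx)
    have h2 : x ≠ z₂ := fun h => (aux_mem_bdry.mp hz₂).1 (h ▸ hx)
    simp [hφdef, h1, h2]
  obtain ⟨u, huh, hub⟩ := aux_harm_ext μ Ω hsym hnn hconn hbne φ hφΩ
  have hu_eq : ∀ x ∈ bdry μ Ω, u x = φ x := fun x hx => hub x (aux_mem_bdry.mp hx).1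
  have hφz₁ : φ z₁ = a := if_pos rfl
  have hφz₂ : φ z₂ = b := by
    rw [hφdef]; simp [Ne.symm hzne]
  have hsum_pair : ∀ g : V → ℝ, (∀ x ∈ bdry μ Ω, x ≠ z₁ → x ≠ z₂ → g x = 0) →
      ∑ x ∈ bdry μ Ω, g x = g z₁ + g z₂ := by
    intro g hg
    have hsub : {z₁, z₂} ⊆ bdry μ Ω := by
      intro x hx
      rcases Finset.mem_insert.mp hx with rfl | hx
      · exact hz₁
      · rw [Finset.mem_singleton.mp hx]; exact hz₂
    rw [← Finset.sum_subset hsub (fun x hx hnx => hg x hx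
      (fun h => hnx (by rw [h]; exact Finset.mem_insert_self _ _))
      (fun h => hnx (by rw [h]; exact Finset.mem_insert_of_mem (Finset.mem_singleton_self _)))),
      Finset.sum_pair hzne]
  have habm : a * m₁ + b * m₂ = 0 := by
    rw [hbdef]; field_simp; ring
  have hab2 : a ^ 2 * m₁ + b ^ 2 * m₂ = 1 := by
    have hb2 : b ^ 2 = a ^ 2 * m₁ ^ 2 / m₂ ^ 2 := by
      rw [hbdef]; ring
    rw [hb2, ha2]
    field_simp
    ring
  have hn1 : ∑ x ∈ bdry μ Ω, u x ^ 2 * vm μ Ω x = 1 := by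
    rw [Finset.sum_congr rfl fun x hx => by rw [hu_eq x hx]]
    rw [hsum_pair (fun x => φ x ^ 2 * vm μ Ω x) (fun x _ h1 h2 => by
      rw [hφdef]; simp only [if_neg h1, if_neg h2]; ring)]
    rw [hφz₁, hφz₂, ← hm₁def, ← hm₂def]
    exact hab2
  have hn0 : ∑ x ∈ bdry μ Ω, u x * vm μ Ω x = 0 := by
    rw [Finset.sum_congr rfl fun x hx => by rw [hu_eq x hx]]
    rw [hsum_pair (fun x => φ x * vm μ Ω x) (fun x _ h1 h2 => by
      rw [hφdef]; simp only [if_neg h1, if_neg h2]; ring)]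
    rw [hφz₁, hφz₂, ← hm₁def, ← hm₂def]
    exact habm
  have hmemL : dirichlet μ Ω u ∈ { r : ℝ | ∃ u : V → ℝ, IsHarmonic μ Ω u ∧
      (∑ x ∈ bdry μ Ω, u x ^ 2 * vm μ Ω x) = 1 ∧
      (∑ x ∈ bdry μ Ω, u x * vm μ Ω x) = 0 ∧
      r = dirichlet μ Ω u } := ⟨u, huh, hn1, hn0, rfl⟩
  -- lower bound for every member of the lambda1 set
  rw [ge_iff_le, lambda1]
  refine le_csInf ⟨_, hmemL⟩ ?_
  rintro r ⟨w, -, hw1, hw0, rfl⟩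
  have hMpos : 0 < ∑ x ∈ clos μ Ω, vm μ Ω x :=
    Finset.sum_pos (fun x hx => hvmc x hx) ⟨z₁, hbclos z₁ hz₁⟩
  set M := ∑ x ∈ clos μ Ω, vm μ Ω x with hMdef
  set t := (∑ x ∈ clos μ Ω, w x * vm μ Ω x) / M with htdef
  set f : V → ℝ := fun x => w x - t with hfdef
  have hmean : ∑ x ∈ clos μ Ω, f x * vm μ Ω x = 0 := by
    have hexp : ∀ x, f x * vm μ Ω x = w x * vm μ Ω x - t * vm μ Ω x := fun x => by
      rw [hfdef]; ring
    rw [Finset.sum_congr rfl fun x _ => hexp x, Finset.sum_sub_distrib,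
      ← Finset.mul_sum, ← hMdef, htdef]
    field_simp; ring
  have hmbpos : 0 < msum μ Ω (bdry μ Ω) := by
    rw [msum]; exact Finset.sum_pos (fun x hx => hvmb x hx) ⟨z₁, hz₁⟩
  have hbdrysum : ∑ x ∈ bdry μ Ω, f x ^ 2 * vm μ Ω x =
      1 + t ^ 2 * msum μ Ω (bdry μ Ω) := by
    have hexp : ∀ x, f x ^ 2 * vm μ Ω x =
        w x ^ 2 * vm μ Ω x - 2 * t * (w x * vm μ Ω x) + t ^ 2 * vm μ Ω x := fun x => by
      rw [hfdef]; ring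
    rw [Finset.sum_congr rfl fun x _ => hexp x, Finset.sum_add_distrib,
      Finset.sum_sub_distrib, ← Finset.mul_sum, ← Finset.mul_sum, hw1, hw0, msum]
    ring
  set denom := ∑ x ∈ clos μ Ω, f x ^ 2 * vm μ Ω x with hdenomdef
  have hΩnn : 0 ≤ ∑ x ∈ Ω, f x ^ 2 * vm μ Ω x :=
    Finset.sum_nonneg fun x _ => mul_nonneg (sq_nonneg _) (aux_vm_nonneg μ Ω hnn x)
  have hdenom1 : 1 ≤ denom := by
    rw [hdenomdef, hclos_sum, hbdrysum]
    nlinarith [sq_nonneg t, hmbpos]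
  have hfne : ∃ x ∈ clos μ Ω, f x ≠ 0 := by
    by_contra h
    push_neg at h
    have hwt : ∀ x ∈ clos μ Ω, w x = t := fun x hx => by
      have := h x hx; rw [hfdef] at this; simpa [sub_eq_zero] using this
    have ht0 : t = 0 := by
      have h1 : ∑ x ∈ bdry μ Ω, w x * vm μ Ω x = t * msum μ Ω (bdry μ Ω) := by
        rw [msum, Finset.mul_sum]
        exact Finset.sum_congr rfl fun x hx => by rw [hwt x (hbclos x hx)]
      rw [hw0] at h1
      have := hmbpos
      rcases mul_eq_zero.mp h1.symm with h | h
      · exact h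
      · linarith
    have hcontr : (1:ℝ) = 0 := by
      rw [← hw1]
      refine Finset.sum_eq_zero fun x hx => ?_
      rw [hwt x (hbclos x hx), ht0]
      ring
    norm_num at hcontr
  have hDf : dirichlet μ Ω f = dirichlet μ Ω w := aux_dirichlet_shift μ Ω w t
  have hmemζ : dirichlet μ Ω w / denom ∈ { r : ℝ | ∃ f : V → ℝ,
      (∃ x ∈ clos μ Ω, f x ≠ 0) ∧
      (∑ x ∈ clos μ Ω, f x * vm μ Ω x) = 0 ∧
      r = dirichlet μ Ω f / ∑ x ∈ clos μ Ω, f x ^ 2 * vm μ Ω x } :=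
    ⟨f, hfne, hmean, by rw [hDf, hdenomdef]⟩
  have hbddζ : ∀ r' ∈ { r : ℝ | ∃ f : V → ℝ,
      (∃ x ∈ clos μ Ω, f x ≠ 0) ∧
      (∑ x ∈ clos μ Ω, f x * vm μ Ω x) = 0 ∧
      r = dirichlet μ Ω f / ∑ x ∈ clos μ Ω, f x ^ 2 * vm μ Ω x }, 0 ≤ r' := by
    rintro r' ⟨g, -, -, rfl⟩
    exact div_nonneg (aux_dirichlet_nonneg μ Ω hnn g)
      (Finset.sum_nonneg fun x _ => mul_nonneg (sq_nonneg _) (aux_vm_nonneg μ Ω hnn x))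
  have hζle : zeta1 μ Ω ≤ dirichlet μ Ω w / denom := by
    rw [zeta1]
    exact csInf_le ⟨0, fun r' hr' => hbddζ r' hr'⟩ hmemζ
  have hζ0 : 0 ≤ zeta1 μ Ω := by
    rw [zeta1]
    exact Real.sInf_nonneg hbddζ
  have hdpos : (0:ℝ) < denom := by linarith
  have hle2 : dirichlet μ Ω w / denom ≤ 2 := by
    rw [div_le_iff₀ hdpos]
    have hdle := aux_dirichlet_le μ Ω hsym hnn f
    rw [hDf, ← hdenomdef] at hdle
    linarith
  have hζ2 : zeta1 μ Ω ≤ 2 := hζle.trans hle2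
  have hD : zeta1 μ Ω * denom ≤ dirichlet μ Ω w := (le_div_iff₀ hdpos).mp hζle
  nlinarith [mul_nonneg hζ0 (by linarith : (0:ℝ) ≤ denom - 1),
    mul_nonneg hζ0 (by linarith : (0:ℝ) ≤ 2 - zeta1 μ Ω)]
end

section
/- Let G be a finite graph with symmetric edge weights and Ω a finite subset of vertices. For y ∈ δΩ let P(·,y) : Ω̄ → ℝ be the harmonic extension of the boundary function (1/m_y)δ_y (the Poisson kernel). Define μ̃_{xy} = Σ_{z∈Ω} μ_{xz} P(z,y) m_y for x, y ∈ δΩ. Then the Dirichlet-to-Neumann operator can be written as Λφ(x) = (1/m_x) Σ_{y∈δΩ} μ̃_{xy} (φ(x) − φ(y)) for all φ : δΩ → ℝ and x ∈ δΩ, and moreover Σ_{y∈δΩ} μ̃_{xy} = m_x for all x ∈ δΩ. -/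
open scoped Classical
open Finset

variable {V : Type*} [Fintype V]

section Aux

variable (μ : V → V → ℝ) (Ω : Finset V)

lemma neighbor_mem_clos (hsym : ∀ x y, μ x y = μ y x) {x y : V} (hx : x ∈ Ω)
    (hμ : 0 < μ x y) : y ∈ clos μ Ω := by
  by_cases hy : y ∈ Ω
  · exact Finset.mem_union_left _ hy
  · refine Finset.mem_union_right _ ?_
    simp only [bdry, Finset.mem_filter, Finset.mem_univ, true_and]
    exact ⟨hy, x, hx, by rwa [hsym]⟩

lemma harm_le_zero (hsym : ∀ x y, μ x y = μ y x) (hnn : ∀ x y, 0 ≤ μ x y)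
    (hm : ∀ x ∈ clos μ Ω, 0 < vm μ Ω x) (hconn : TilConnected μ Ω)
    {w : V → ℝ} (hw : IsHarmonic μ Ω w) (hb : ∀ z ∈ bdry μ Ω, w z = 0)
    (hbne : (bdry μ Ω).Nonempty) : ∀ z ∈ clos μ Ω, w z ≤ 0 := by
  obtain ⟨b, hbmem⟩ := hbne
  have hcne : (clos μ Ω).Nonempty := ⟨b, Finset.mem_union_right _ hbmem⟩
  set M := (clos μ Ω).sup' hcne w with hMdef
  have hle : ∀ z ∈ clos μ Ω, w z ≤ M := fun z hz => Finset.le_sup' w hz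
  obtain ⟨x0, hx0c, hx0⟩ := Finset.exists_mem_eq_sup' hcne w
  by_cases hMpos : M ≤ 0
  · exact fun z hz => (hle z hz).trans hMpos
  push_neg at hMpos
  exfalso
  have prop : ∀ y, Relation.ReflTransGen (tilAdj μ Ω) x0 y →
      y ∈ clos μ Ω ∧ w y = M := by
    intro y hy
    induction hy with
    | refl => exact ⟨hx0c, hx0.symm⟩
    | @tail p q hp hpq ih =>
      obtain ⟨hpc, hpM⟩ := ih
      by_cases hpΩ : p ∈ Ω
      · have hvm : 0 < vm μ Ω p := hm p (Finset.mem_union_left _ hpΩ)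
        have hnum : ∑ t, μ p t * (w t - w p) = 0 := by
          have h0 := hw p hpΩ
          unfold lap at h0
          exact (div_eq_zero_iff.mp h0).resolve_right hvm.ne'
        have hnonpos : ∀ t ∈ Finset.univ, μ p t * (w t - w p) ≤ 0 := by
          intro t _
          rcases (hnn p t).lt_or_eq with hpos | hzero
          · have htc : t ∈ clos μ Ω := neighbor_mem_clos μ Ω hsym hpΩ hpos
            have hwt : w t ≤ M := hle t htc
            rw [hpM]
            exact mul_nonpos_of_nonneg_of_nonpos (hnn p t) (by linarith)
          · rw [← hzero]; simp
        have hall := (Finset.sum_eq_zero_iff_of_nonpos hnonpos).mp hnum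
        have hq := hall q (Finset.mem_univ q)
        have hμpq : 0 < μ p q := hpq.1
        have hwq : w q - w p = 0 := by
          rcases mul_eq_zero.mp hq with h | h
          · exact absurd h hμpq.ne'
          · exact h
        exact ⟨neighbor_mem_clos μ Ω hsym hpΩ hμpq, by rw [← hpM]; linarith⟩
      · have hpb : p ∈ bdry μ Ω := by
          rcases Finset.mem_union.mp hpc with h | h
          · exact absurd h hpΩ
          · exact h
        have := hb p hpb
        rw [this] at hpM; linarith
  have hpath := hconn x0 hx0c b (Finset.mem_union_right _ hbmem)
  obtain ⟨_, hbM⟩ := prop b hpath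
  rw [hb b hbmem] at hbM
  linarith

lemma harm_zero (hsym : ∀ x y, μ x y = μ y x) (hnn : ∀ x y, 0 ≤ μ x y)
    (hm : ∀ x ∈ clos μ Ω, 0 < vm μ Ω x) (hconn : TilConnected μ Ω)
    {w : V → ℝ} (hw : IsHarmonic μ Ω w) (hb : ∀ z ∈ bdry μ Ω, w z = 0)
    (hbne : (bdry μ Ω).Nonempty) : ∀ z ∈ clos μ Ω, w z = 0 := by
  intro z hz
  have h1 := harm_le_zero μ Ω hsym hnn hm hconn hw hb hbne z hz
  have hneg : IsHarmonic μ Ω (fun t => -w t) := by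
    intro x hx
    have h0 := hw x hx
    unfold lap at h0 ⊢
    rw [div_eq_zero_iff] at h0 ⊢
    rcases h0 with h | h
    · left
      have heq : ∑ t, μ x t * (-w t - -w x) = -∑ t, μ x t * (w t - w x) := by
        rw [← Finset.sum_neg_distrib]
        apply Finset.sum_congr rfl; intros; ring
      rw [heq, h, neg_zero]
    · right; exact h
  have h2 := harm_le_zero μ Ω hsym hnn hm hconn hneg
    (fun z hz => by simp [hb z hz]) ⟨_, hbne.choose_spec⟩ z hz
  linarith

lemma num_comb (a d : ℝ) (c : V → ℝ) (B : Finset V) (u : V → ℝ) (P : V → V → ℝ)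
    (x : V) :
    ∑ t, μ x t * ((a * u t + ∑ y ∈ B, c y * P t y + d) -
        (a * u x + ∑ y ∈ B, c y * P x y + d))
      = a * (∑ t, μ x t * (u t - u x)) +
          ∑ y ∈ B, c y * ∑ t, μ x t * (P t y - P x y) := by
  have key : ∀ t, μ x t * ((a * u t + ∑ y ∈ B, c y * P t y + d) -
      (a * u x + ∑ y ∈ B, c y * P x y + d))
      = a * (μ x t * (u t - u x)) + ∑ y ∈ B, c y * (μ x t * (P t y - P x y)) := by
    intro t
    have hS : ∑ y ∈ B, c y * (μ x t * (P t y - P x y)) =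
        μ x t * ((∑ y ∈ B, c y * P t y) - (∑ y ∈ B, c y * P x y)) := by
      rw [mul_sub, Finset.mul_sum, Finset.mul_sum, ← Finset.sum_sub_distrib]
      apply Finset.sum_congr rfl; intros; ring
    rw [hS]; ring
  calc ∑ t, μ x t * ((a * u t + ∑ y ∈ B, c y * P t y + d) -
        (a * u x + ∑ y ∈ B, c y * P x y + d))
      = ∑ t, (a * (μ x t * (u t - u x)) +
          ∑ y ∈ B, c y * (μ x t * (P t y - P x y))) :=
        Finset.sum_congr rfl fun t _ => key t
    _ = a * (∑ t, μ x t * (u t - u x)) +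
          ∑ y ∈ B, c y * ∑ t, μ x t * (P t y - P x y) := by
        rw [Finset.sum_add_distrib, ← Finset.mul_sum, Finset.sum_comm]
        congr 1
        apply Finset.sum_congr rfl
        intros y _
        rw [Finset.mul_sum]

lemma harm_comb (hm : ∀ x ∈ clos μ Ω, 0 < vm μ Ω x) (a d : ℝ) (c : V → ℝ)
    (B : Finset V) (u : V → ℝ) (P : V → V → ℝ) (hu : IsHarmonic μ Ω u)
    (hP : ∀ y ∈ B, IsHarmonic μ Ω (fun z => P z y)) :
    IsHarmonic μ Ω (fun z => a * u z + ∑ y ∈ B, c y * P z y + d) := by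
  intro x hx
  have hvm := (hm x (Finset.mem_union_left _ hx)).ne'
  unfold lap
  rw [div_eq_zero_iff]
  left
  rw [num_comb]
  have h1 : ∑ t, μ x t * (u t - u x) = 0 := by
    have h0 := hu x hx
    unfold lap at h0
    exact (div_eq_zero_iff.mp h0).resolve_right hvm
  rw [h1, mul_zero, zero_add]
  apply Finset.sum_eq_zero
  intro y hy
  have h0 := hP y hy x hx
  unfold lap at h0
  have := (div_eq_zero_iff.mp h0).resolve_right hvm
  simp only at this
  rw [this, mul_zero]

end Aux

/-- Proposition 2.5: via the Poisson kernels P(·,y) (harmonic extensions of (1/m_y)δ_y),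
setting μ̃_{xy} = (Σ_{z∈Ω} μ_{xz} P(z,y)) m_y, one has Σ_{y∈δΩ} μ̃_{xy} = m_x, and the
DtN operator is Λφ(x) = (1/m_x) Σ_{y∈δΩ} μ̃_{xy}(φ(x) − φ(y)). -/
theorem stmt_7 (μ : V → V → ℝ) (Ω : Finset V)
    (hsym : ∀ x y, μ x y = μ y x) (hnn : ∀ x y, 0 ≤ μ x y)
    (hm : ∀ x ∈ clos μ Ω, 0 < vm μ Ω x) (hconn : TilConnected μ Ω)
    (P : V → V → ℝ)
    (hP : ∀ y ∈ bdry μ Ω, IsHarmonic μ Ω (fun z => P z y) ∧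
      ∀ z ∈ bdry μ Ω, P z y = if z = y then 1 / vm μ Ω y else 0) :
    ∀ x ∈ bdry μ Ω,
      (∑ y ∈ bdry μ Ω, (∑ z ∈ Ω, μ x z * P z y) * vm μ Ω y) = vm μ Ω x ∧
      ∀ φ u : V → ℝ, IsHarmonic μ Ω u → (∀ z ∈ bdry μ Ω, u z = φ z) →
        nderiv μ Ω u x =
          (∑ y ∈ bdry μ Ω, ((∑ z ∈ Ω, μ x z * P z y) * vm μ Ω y) * (φ x - φ y)) /
            vm μ Ω x := by
  intro x hxb
  have hbne : (bdry μ Ω).Nonempty := ⟨x, hxb⟩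
  -- boundary values of Σ_y vm_y P(z,y)
  have hbv : ∀ z ∈ bdry μ Ω, ∑ y ∈ bdry μ Ω, vm μ Ω y * P z y = 1 := by
    intro z hz
    have hterm : ∀ y ∈ bdry μ Ω, vm μ Ω y * P z y = if y = z then 1 else 0 := by
      intro y hy
      rw [(hP y hy).2 z hz]
      by_cases h : z = y
      · subst h
        have hne := (hm z (Finset.mem_union_right _ hz)).ne'
        rw [if_pos rfl, if_pos rfl]
        field_simp
      · rw [if_neg h, if_neg (fun hh => h hh.symm), mul_zero]
    rw [Finset.sum_congr rfl hterm,
      Finset.sum_ite_eq' (bdry μ Ω) z (fun _ => (1 : ℝ)), if_pos hz]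
  -- key1 : Σ_y vm_y P(z,y) = 1 on clos
  have hzero : IsHarmonic μ Ω (fun _ : V => (0 : ℝ)) := by
    intro t ht; simp [lap]
  have hkey1 : ∀ z ∈ clos μ Ω, (∑ y ∈ bdry μ Ω, vm μ Ω y * P z y) = 1 := by
    have hharm := harm_comb μ Ω hm 0 (-1) (vm μ Ω) (bdry μ Ω) (fun _ => 0) P
      hzero (fun y hy => (hP y hy).1)
    have hz0 := harm_zero μ Ω hsym hnn hm hconn hharm
      (fun z hz => by simp [hbv z hz]) hbne
    intro z hz
    have h := hz0 z hz
    simp only [zero_mul, zero_add] at h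
    linarith
  -- key2 : harmonic extension representation
  have hkey2 : ∀ φ u : V → ℝ, IsHarmonic μ Ω u → (∀ z ∈ bdry μ Ω, u z = φ z) →
      ∀ z ∈ clos μ Ω, u z = ∑ y ∈ bdry μ Ω, (vm μ Ω y * φ y) * P z y := by
    intro φ u hu hbu
    have hharm := harm_comb μ Ω hm 1 0 (fun y => -(vm μ Ω y * φ y)) (bdry μ Ω) u P
      hu (fun y hy => (hP y hy).1)
    have hbz : ∀ z ∈ bdry μ Ω,
        (fun z => 1 * u z + ∑ y ∈ bdry μ Ω, -(vm μ Ω y * φ y) * P z y + 0) z = 0 := by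
      intro z hz
      simp only
      have hsum : ∑ y ∈ bdry μ Ω, -(vm μ Ω y * φ y) * P z y = -φ z := by
        have hterm : ∀ y ∈ bdry μ Ω,
            -(vm μ Ω y * φ y) * P z y = if y = z then -φ y else 0 := by
          intro y hy
          rw [(hP y hy).2 z hz]
          by_cases h : z = y
          · subst h
            have hne := (hm z (Finset.mem_union_right _ hz)).ne'
            rw [if_pos rfl, if_pos rfl]
            field_simp
          · rw [if_neg h, if_neg (fun hh => h hh.symm), mul_zero]
        rw [Finset.sum_congr rfl hterm,
          Finset.sum_ite_eq' (bdry μ Ω) z (fun y => -φ y), if_pos hz]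
      rw [hsum, hbu z hz]; ring
    have hz0 := harm_zero μ Ω hsym hnn hm hconn hharm hbz hbne
    intro z hz
    have h := hz0 z hz
    have hneg : ∑ y ∈ bdry μ Ω, -(vm μ Ω y * φ y) * P z y
        = -∑ y ∈ bdry μ Ω, (vm μ Ω y * φ y) * P z y := by
      rw [← Finset.sum_neg_distrib]; apply Finset.sum_congr rfl; intros; ring
    rw [hneg] at h; linarith
  -- vm at x
  have hxΩ : x ∉ Ω := by
    have h := hxb
    simp only [bdry, Finset.mem_filter, Finset.mem_univ, true_and] at h
    exact h.1
  have hvmx : vm μ Ω x = ∑ z ∈ Ω, μ x z := by simp [vm, hxΩ]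
  -- part 1
  have hpart1 : (∑ y ∈ bdry μ Ω, (∑ z ∈ Ω, μ x z * P z y) * vm μ Ω y) = vm μ Ω x := by
    have hswap : ∑ y ∈ bdry μ Ω, (∑ z ∈ Ω, μ x z * P z y) * vm μ Ω y
        = ∑ z ∈ Ω, μ x z * ∑ y ∈ bdry μ Ω, vm μ Ω y * P z y := by
      calc ∑ y ∈ bdry μ Ω, (∑ z ∈ Ω, μ x z * P z y) * vm μ Ω y
          = ∑ y ∈ bdry μ Ω, ∑ z ∈ Ω, μ x z * P z y * vm μ Ω y := by
            apply Finset.sum_congr rfl; intros; rw [Finset.sum_mul]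
        _ = ∑ z ∈ Ω, ∑ y ∈ bdry μ Ω, μ x z * P z y * vm μ Ω y := Finset.sum_comm
        _ = ∑ z ∈ Ω, μ x z * ∑ y ∈ bdry μ Ω, vm μ Ω y * P z y := by
            apply Finset.sum_congr rfl; intro z _
            rw [Finset.mul_sum]; apply Finset.sum_congr rfl; intros; ring
    rw [hswap, hvmx]
    apply Finset.sum_congr rfl
    intro z hz
    rw [hkey1 z (Finset.mem_union_left _ hz), mul_one]
  refine ⟨hpart1, ?_⟩
  intro φ u hu hbu
  unfold nderiv
  congr 1
  have hux : u x = φ x := hbu x hxb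
  have hurep := hkey2 φ u hu hbu
  have hL : ∑ z ∈ Ω, μ x z * (u x - u z)
      = φ x * vm μ Ω x
        - ∑ y ∈ bdry μ Ω, ((∑ z ∈ Ω, μ x z * P z y) * vm μ Ω y) * φ y := by
    have h1 : ∑ z ∈ Ω, μ x z * (u x - u z)
        = (∑ z ∈ Ω, μ x z * u x) - ∑ z ∈ Ω, μ x z * u z := by
      rw [← Finset.sum_sub_distrib]; apply Finset.sum_congr rfl; intros; ring
    have h2 : ∑ z ∈ Ω, μ x z * u x = φ x * vm μ Ω x := by
      rw [← Finset.sum_mul, hux, hvmx, mul_comm]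
    have h3 : ∑ z ∈ Ω, μ x z * u z
        = ∑ y ∈ bdry μ Ω, ((∑ z ∈ Ω, μ x z * P z y) * vm μ Ω y) * φ y := by
      calc ∑ z ∈ Ω, μ x z * u z
          = ∑ z ∈ Ω, μ x z * ∑ y ∈ bdry μ Ω, (vm μ Ω y * φ y) * P z y := by
            apply Finset.sum_congr rfl; intro z hz
            rw [hurep z (Finset.mem_union_left _ hz)]
        _ = ∑ z ∈ Ω, ∑ y ∈ bdry μ Ω, μ x z * ((vm μ Ω y * φ y) * P z y) := by
            apply Finset.sum_congr rfl; intros; rw [Finset.mul_sum]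
        _ = ∑ y ∈ bdry μ Ω, ∑ z ∈ Ω, μ x z * ((vm μ Ω y * φ y) * P z y) :=
            Finset.sum_comm
        _ = ∑ y ∈ bdry μ Ω, ((∑ z ∈ Ω, μ x z * P z y) * vm μ Ω y) * φ y := by
            apply Finset.sum_congr rfl; intro y hy
            rw [Finset.sum_mul, Finset.sum_mul]
            apply Finset.sum_congr rfl; intros; ring
    rw [h1, h2, h3]
  rw [hL]
  have hsplit : ∑ y ∈ bdry μ Ω, ((∑ z ∈ Ω, μ x z * P z y) * vm μ Ω y) * (φ x - φ y)
      = (∑ y ∈ bdry μ Ω, (∑ z ∈ Ω, μ x z * P z y) * vm μ Ω y) * φ x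
        - ∑ y ∈ bdry μ Ω, ((∑ z ∈ Ω, μ x z * P z y) * vm μ Ω y) * φ y := by
    rw [Finset.sum_mul, ← Finset.sum_sub_distrib]
    apply Finset.sum_congr rfl; intros; ring
  rw [hsplit, hpart1]
  ring
end

section
/- Let G be a finite graph with symmetric edge weights and Ω a finite subset of vertices with Ω̃ connected. Let δ_I Ω = {x ∈ Ω : x ∼ y for some y ∈ δΩ} and define the linear operator Q : ℝ^{δΩ} → ℝ^{δ_I Ω} by Qφ(x) = (1/m_x) Σ_{y∈δΩ} μ_{xy} φ(y) for x ∈ δ_I Ω. Then the eigenspace E_1(Λ) = {φ : δΩ → ℝ : Λφ = φ} of the Dirichlet-to-Neumann operator for the eigenvalue 1 equals the kernel of Q. -/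
open scoped Classical
open Finset

variable {V : Type*} [Fintype V]

/-- δ_IΩ = {x ∈ Ω : x ∼ y for some y ∈ δΩ}. -/
noncomputable def bdryI (μ : V → V → ℝ) (Ω : Finset V) : Finset V :=
  Ω.filter fun x => ∃ y ∈ bdry μ Ω, 0 < μ x y

lemma mem_bdry_iff (μ : V → V → ℝ) (Ω : Finset V) (x : V) :
    x ∈ bdry μ Ω ↔ x ∉ Ω ∧ ∃ y ∈ Ω, 0 < μ x y := by
  simp [bdry]

lemma mu_zero_outside (μ : V → V → ℝ) (Ω : Finset V)
    (hsym : ∀ x y, μ x y = μ y x) (hnn : ∀ x y, 0 ≤ μ x y)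
    {x y : V} (hx : x ∈ Ω) (hyΩ : y ∉ Ω) (hyb : y ∉ bdry μ Ω) : μ x y = 0 := by
  by_contra h
  have hpos : 0 < μ x y := lt_of_le_of_ne (hnn x y) (Ne.symm h)
  exact hyb ((mem_bdry_iff μ Ω y).mpr ⟨hyΩ, x, hx, by rw [← hsym]; exact hpos⟩)

/-- Splitting a weighted sum over all vertices into the Ω part and the δΩ part. -/
lemma sum_split (μ : V → V → ℝ) (Ω : Finset V)
    (hsym : ∀ x y, μ x y = μ y x) (hnn : ∀ x y, 0 ≤ μ x y)
    {x : V} (hx : x ∈ Ω) (f : V → ℝ) :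
    ∑ y, μ x y * f y = ∑ y ∈ Ω, μ x y * f y + ∑ y ∈ bdry μ Ω, μ x y * f y := by
  have hdisj : Disjoint Ω (bdry μ Ω) := by
    rw [Finset.disjoint_left]
    intro a ha hab
    exact (((mem_bdry_iff μ Ω a).mp hab).1) ha
  rw [← Finset.sum_union hdisj]
  apply (Finset.sum_subset (Finset.subset_univ _) _).symm
  intro y _ hy
  rw [Finset.mem_union] at hy
  push_neg at hy
  rw [mu_zero_outside μ Ω hsym hnn hx hy.1 hy.2, zero_mul]

/-- Key lemma: a harmonic function whose "cross term" vanishes is zero on Ω. -/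
lemma key_zero (μ : V → V → ℝ) (Ω : Finset V)
    (hsym : ∀ x y, μ x y = μ y x) (hnn : ∀ x y, 0 ≤ μ x y)
    (hm : ∀ x ∈ clos μ Ω, 0 < vm μ Ω x) (hconn : TilConnected μ Ω)
    (u : V → ℝ) (hu : IsHarmonic μ Ω u)
    {z0 : V} (hz0 : z0 ∈ bdry μ Ω)
    (hcross : ∑ x ∈ Ω, ∑ y ∈ bdry μ Ω, μ x y * (u x * u y) = 0) :
    ∀ x ∈ Ω, u x = 0 := by
  have hΩclos : Ω ⊆ clos μ Ω := Finset.subset_union_left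
  have hbclos : bdry μ Ω ⊆ clos μ Ω := Finset.subset_union_right
  -- harmonicity in numerator form
  have hH : ∀ x ∈ Ω, ∑ y, μ x y * (u y - u x) = 0 := by
    intro x hx
    have h := hu x hx
    unfold lap at h
    rcases div_eq_zero_iff.mp h with h' | h'
    · exact h'
    · exact absurd h' (hm x (hΩclos hx)).ne'
  -- total energy identity
  have hS : (∑ x ∈ Ω, ∑ y ∈ Ω, μ x y * (u x * (u y - u x))) +
      (∑ x ∈ Ω, ∑ y ∈ bdry μ Ω, μ x y * (u x * (u y - u x))) = 0 := by
    rw [← Finset.sum_add_distrib]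
    apply Finset.sum_eq_zero
    intro x hx
    have h1 : ∑ y, μ x y * (u x * (u y - u x)) =
        (∑ y ∈ Ω, μ x y * (u x * (u y - u x))) +
        (∑ y ∈ bdry μ Ω, μ x y * (u x * (u y - u x))) :=
      sum_split μ Ω hsym hnn hx _
    rw [← h1]
    have h2 : ∑ y, μ x y * (u x * (u y - u x)) = u x * ∑ y, μ x y * (u y - u x) := by
      rw [Finset.mul_sum]; exact Finset.sum_congr rfl fun y _ => by ring
    rw [h2, hH x hx, mul_zero]
  -- symmetrize the first term
  set T1 := ∑ x ∈ Ω, ∑ y ∈ Ω, μ x y * (u x * (u y - u x)) with hT1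
  set E1 := ∑ x ∈ Ω, ∑ y ∈ Ω, μ x y * (u x - u y) ^ 2 with hE1def
  have hswap : T1 = ∑ x ∈ Ω, ∑ y ∈ Ω, μ x y * (u y * (u x - u y)) := by
    rw [hT1, Finset.sum_comm]
    exact Finset.sum_congr rfl fun x _ => Finset.sum_congr rfl fun y _ => by rw [hsym]
  have h2T1 : 2 * T1 = -E1 := by
    calc 2 * T1 = T1 + (∑ x ∈ Ω, ∑ y ∈ Ω, μ x y * (u y * (u x - u y))) := by
          rw [← hswap]; ring
    _ = ∑ x ∈ Ω, ∑ y ∈ Ω, (μ x y * (u x * (u y - u x)) + μ x y * (u y * (u x - u y))) := by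
        rw [hT1, ← Finset.sum_add_distrib]
        exact Finset.sum_congr rfl fun x _ => (Finset.sum_add_distrib).symm
    _ = -E1 := by
        rw [hE1def, ← Finset.sum_neg_distrib]
        exact Finset.sum_congr rfl fun x _ => by
          rw [← Finset.sum_neg_distrib]
          exact Finset.sum_congr rfl fun y _ => by ring
  -- second term
  set E2 := ∑ x ∈ Ω, ∑ y ∈ bdry μ Ω, μ x y * u x ^ 2 with hE2def
  have hT2 : (∑ x ∈ Ω, ∑ y ∈ bdry μ Ω, μ x y * (u x * (u y - u x))) = -E2 := by
    have : (∑ x ∈ Ω, ∑ y ∈ bdry μ Ω, μ x y * (u x * (u y - u x))) =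
        (∑ x ∈ Ω, ∑ y ∈ bdry μ Ω, μ x y * (u x * u y)) -
        (∑ x ∈ Ω, ∑ y ∈ bdry μ Ω, μ x y * u x ^ 2) := by
      rw [← Finset.sum_sub_distrib]
      exact Finset.sum_congr rfl fun x _ => by
        rw [← Finset.sum_sub_distrib]
        exact Finset.sum_congr rfl fun y _ => by ring
    rw [this, hcross, hE2def]; ring
  have hE1nn : 0 ≤ E1 := Finset.sum_nonneg fun x _ => Finset.sum_nonneg fun y _ =>
    mul_nonneg (hnn x y) (sq_nonneg _)
  have hE2nn : 0 ≤ E2 := Finset.sum_nonneg fun x _ => Finset.sum_nonneg fun y _ =>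
    mul_nonneg (hnn x y) (sq_nonneg _)
  have hsum0 : E1 / 2 + E2 = 0 := by
    have := hS
    rw [hT2] at this
    have hT1v : T1 = -E1 / 2 := by linarith
    linarith
  have hE1z : E1 = 0 := by linarith
  have hE2z : E2 = 0 := by linarith
  have hE1pt : ∀ x ∈ Ω, ∀ y ∈ Ω, μ x y * (u x - u y) ^ 2 = 0 := by
    intro x hx y hy
    have h1 := (Finset.sum_eq_zero_iff_of_nonneg (fun x _ => Finset.sum_nonneg
      fun y _ => mul_nonneg (hnn x y) (sq_nonneg _))).mp hE1z x hx
    exact (Finset.sum_eq_zero_iff_of_nonneg (fun y _ =>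
      mul_nonneg (hnn x y) (sq_nonneg _))).mp h1 y hy
  have hE2pt : ∀ x ∈ Ω, ∀ y ∈ bdry μ Ω, μ x y * u x ^ 2 = 0 := by
    intro x hx y hy
    have h1 := (Finset.sum_eq_zero_iff_of_nonneg (fun x _ => Finset.sum_nonneg
      fun y _ => mul_nonneg (hnn x y) (sq_nonneg _))).mp hE2z x hx
    exact (Finset.sum_eq_zero_iff_of_nonneg (fun y _ =>
      mul_nonneg (hnn x y) (sq_nonneg _))).mp h1 y hy
  -- connectivity induction
  intro x hx
  have hpath := hconn x (hΩclos hx) z0 (hbclos hz0)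
  induction hpath using Relation.ReflTransGen.head_induction_on with
  | refl => exact absurd hx ((mem_bdry_iff μ Ω z0).mp hz0).1
  | head hac _ ih =>
    rename_i a c _
    obtain ⟨hpos, -⟩ := hac
    by_cases hc : c ∈ Ω
    · have h0 := hE1pt a hx c hc
      have huac : u a = u c := by
        have := mul_eq_zero.mp h0
        rcases this with h | h
        · exact absurd h hpos.ne'
        · have := sq_eq_zero_iff.mp h; linarith
      rw [huac]; exact ih hc
    · have hcb : c ∈ bdry μ Ω :=
        (mem_bdry_iff μ Ω c).mpr ⟨hc, a, hx, by rw [← hsym]; exact hpos⟩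
      have h0 := hE2pt a hx c hcb
      rcases mul_eq_zero.mp h0 with h | h
      · exact absurd h hpos.ne'
      · exact sq_eq_zero_iff.mp h

lemma harm_num (μ : V → V → ℝ) (Ω : Finset V)
    (hm : ∀ x ∈ clos μ Ω, 0 < vm μ Ω x) {u : V → ℝ} (hu : IsHarmonic μ Ω u) :
    ∀ x ∈ Ω, ∑ y, μ x y * (u y - u x) = 0 := by
  intro x hx
  have h := hu x hx
  unfold lap at h
  rcases div_eq_zero_iff.mp h with h' | h'
  · exact h'
  · exact absurd h' (hm x (Finset.subset_union_left hx)).ne'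

/-- Proposition 3.6(2): the eigenspace E₁(Λ) of the DtN operator for the eigenvalue 1
equals the kernel of Q, where Qφ(x) = (1/m_x) Σ_{y∈δΩ} μ_{xy} φ(y) for x ∈ δ_IΩ. -/
theorem stmt_12 (μ : V → V → ℝ) (Ω : Finset V)
    (hsym : ∀ x y, μ x y = μ y x) (hnn : ∀ x y, 0 ≤ μ x y)
    (hm : ∀ x ∈ clos μ Ω, 0 < vm μ Ω x) (hconn : TilConnected μ Ω) :
    ∀ φ u : V → ℝ, IsHarmonic μ Ω u → (∀ z ∈ bdry μ Ω, u z = φ z) →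
      ((∀ z ∈ bdry μ Ω, nderiv μ Ω u z = φ z) ↔
        (∀ x ∈ bdryI μ Ω, (∑ y ∈ bdry μ Ω, μ x y * φ y) / vm μ Ω x = 0)) := by
  intro φ u hu hbv
  have hΩclos : Ω ⊆ clos μ Ω := Finset.subset_union_left
  have hbclos : bdry μ Ω ⊆ clos μ Ω := Finset.subset_union_right
  by_cases hbd : (bdry μ Ω).Nonempty
  swap
  · rw [Finset.not_nonempty_iff_eq_empty] at hbd
    have hbI : bdryI μ Ω = ∅ := by
      simp [bdryI, hbd]
    simp [hbd, hbI]
  obtain ⟨z0, hz0⟩ := hbd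
  have hvmz : ∀ z ∈ bdry μ Ω, vm μ Ω z = ∑ x ∈ Ω, μ z x := by
    intro z hz
    rw [vm, if_neg ((mem_bdry_iff μ Ω z).mp hz).1]
  have hnd : ∀ z ∈ bdry μ Ω,
      (nderiv μ Ω u z = φ z ↔ ∑ x ∈ Ω, μ z x * u x = 0) := by
    intro z hz
    have hv := hm z (hbclos hz)
    rw [nderiv, ← hbv z hz]
    have hnum : ∑ x ∈ Ω, μ z x * (u z - u x) =
        vm μ Ω z * u z - ∑ x ∈ Ω, μ z x * u x := by
      rw [hvmz z hz, Finset.sum_mul, ← Finset.sum_sub_distrib]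
      exact Finset.sum_congr rfl fun x _ => by ring
    rw [hnum, div_eq_iff hv.ne']
    constructor
    · intro h; linarith
    · intro h; linarith
  constructor
  · intro hN x hxI
    have hx : x ∈ Ω := (Finset.mem_filter.mp hxI).1
    have hcross : ∑ a ∈ Ω, ∑ y ∈ bdry μ Ω, μ a y * (u a * u y) = 0 := by
      rw [Finset.sum_comm]
      apply Finset.sum_eq_zero
      intro y hy
      have h0 : ∑ a ∈ Ω, μ y a * u a = 0 := (hnd y hy).mp (hN y hy)
      calc ∑ a ∈ Ω, μ a y * (u a * u y)
          = (∑ a ∈ Ω, μ y a * u a) * u y := by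
            rw [Finset.sum_mul]
            exact Finset.sum_congr rfl fun a _ => by rw [hsym]; ring
        _ = 0 := by rw [h0, zero_mul]
    have hz := key_zero μ Ω hsym hnn hm hconn u hu hz0 hcross
    have h1 := harm_num μ Ω hm hu x hx
    have h2 := sum_split μ Ω hsym hnn hx (fun y => u y - u x)
    have hΩ0 : ∑ y ∈ Ω, μ x y * (u y - u x) = 0 :=
      Finset.sum_eq_zero fun y hy => by rw [hz y hy, hz x hx]; ring
    have hb : ∑ y ∈ bdry μ Ω, μ x y * (u y - u x) = 0 := by
      rw [h2, hΩ0, zero_add] at h1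
      exact h1
    have hnum : ∑ y ∈ bdry μ Ω, μ x y * φ y = 0 := by
      calc ∑ y ∈ bdry μ Ω, μ x y * φ y
          = ∑ y ∈ bdry μ Ω, μ x y * (u y - u x) :=
            Finset.sum_congr rfl fun y hy => by rw [← hbv y hy, hz x hx]; ring
        _ = 0 := hb
    rw [hnum, zero_div]
  · intro hQ z hz
    have hcross : ∑ x ∈ Ω, ∑ y ∈ bdry μ Ω, μ x y * (u x * u y) = 0 := by
      apply Finset.sum_eq_zero
      intro x hx
      by_cases hxI : x ∈ bdryI μ Ω
      · have h0 : ∑ y ∈ bdry μ Ω, μ x y * φ y = 0 :=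
          (div_eq_zero_iff.mp (hQ x hxI)).resolve_right (hm x (hΩclos hx)).ne'
        calc ∑ y ∈ bdry μ Ω, μ x y * (u x * u y)
            = u x * ∑ y ∈ bdry μ Ω, μ x y * φ y := by
              rw [Finset.mul_sum]
              exact Finset.sum_congr rfl fun y hy => by rw [← hbv y hy]; ring
          _ = 0 := by rw [h0, mul_zero]
      · apply Finset.sum_eq_zero
        intro y hy
        have hnp : ¬ 0 < μ x y := fun hpos =>
          hxI (Finset.mem_filter.mpr ⟨hx, y, hy, hpos⟩)
        rw [le_antisymm (not_lt.mp hnp) (hnn x y), zero_mul]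
    have hz0u := key_zero μ Ω hsym hnn hm hconn u hu hz0 hcross
    exact (hnd z hz).mpr (Finset.sum_eq_zero fun x hx => by rw [hz0u x hx, mul_zero])
end

section
/- Let G be a finite graph with symmetric edge weights and Ω a finite subset of vertices with Ω̃ connected, and let δ_I Ω = {x ∈ Ω : x ∼ y for some y ∈ δΩ}. Then dim E_1(Λ) ≥ ♯δΩ − ♯δ_I Ω, where E_1(Λ) = {φ : δΩ → ℝ : Λφ = φ} is the eigenspace of the Dirichlet-to-Neumann operator for the eigenvalue 1. In particular, if ♯δΩ > ♯δ_I Ω then E_1(Λ) ≠ {0}. -/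
open scoped Classical
open Finset

variable {V : Type*} [Fintype V]

/-- Corollary 3.8: dim E₁(Λ) ≥ ♯δΩ − ♯δ_IΩ; in particular E₁(Λ) ≠ {0} when
♯δΩ > ♯δ_IΩ. -/
theorem stmt_13 (μ : V → V → ℝ) (Ω : Finset V)
    (hsym : ∀ x y, μ x y = μ y x) (hnn : ∀ x y, 0 ≤ μ x y)
    (hm : ∀ x ∈ clos μ Ω, 0 < vm μ Ω x) (hconn : TilConnected μ Ω) :
    ∀ Λ : ({x // x ∈ bdry μ Ω} → ℝ) →ₗ[ℝ] ({x // x ∈ bdry μ Ω} → ℝ),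
      (∀ (φ : {x // x ∈ bdry μ Ω} → ℝ) (u : V → ℝ),
        IsHarmonic μ Ω u → (∀ z : {x // x ∈ bdry μ Ω}, u z = φ z) →
        ∀ z : {x // x ∈ bdry μ Ω}, Λ φ z = nderiv μ Ω u z) →
      (bdry μ Ω).card - (bdryI μ Ω).card ≤
          Module.finrank ℝ (LinearMap.ker (Λ - LinearMap.id)) ∧
      ((bdryI μ Ω).card < (bdry μ Ω).card → LinearMap.ker (Λ - LinearMap.id) ≠ ⊥) := by
  classical
  intro Λ hΛ
  -- the constraint map T
  let T : ({x // x ∈ bdry μ Ω} → ℝ) →ₗ[ℝ] ({x // x ∈ bdryI μ Ω} → ℝ) :=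
    { toFun := fun φ x => ∑ z : {x // x ∈ bdry μ Ω}, μ x z * φ z
      map_add' := by
        intro φ ψ; funext x
        simp [mul_add, Finset.sum_add_distrib]
      map_smul' := by
        intro c φ; funext x
        simp [Finset.mul_sum, mul_left_comm] }
  have hdisj : ∀ x ∈ Ω, x ∉ bdry μ Ω := by
    intro x hx hb
    rw [bdry, Finset.mem_filter] at hb
    exact hb.2.1 hx
  -- ker T ≤ ker (Λ - id)
  have hle : LinearMap.ker T ≤ LinearMap.ker (Λ - LinearMap.id) := by
    intro φ hφ
    rw [LinearMap.mem_ker] at hφ ⊢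
    set u : V → ℝ := fun v => if h : v ∈ bdry μ Ω then φ ⟨v, h⟩ else 0 with hu
    have huΩ : ∀ x, x ∉ bdry μ Ω → u x = 0 := by
      intro x hx; simp only [hu]; rw [dif_neg hx]
    have huB : ∀ z : {x // x ∈ bdry μ Ω}, u z = φ z := by
      intro z; simp only [hu]; rw [dif_pos z.2]
    have hTu : ∀ x : V, (∑ z : {x // x ∈ bdry μ Ω}, μ x z * φ z)
        = ∑ y ∈ bdry μ Ω, μ x y * u y := by
      intro x
      rw [Finset.sum_congr rfl fun z _ => by rw [← huB z]]
      exact Finset.sum_coe_sort (bdry μ Ω) (fun y => μ x y * u y)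
    have hharm : IsHarmonic μ Ω u := by
      intro x hx
      have hnum : (∑ y, μ x y * (u y - u x)) = ∑ y ∈ bdry μ Ω, μ x y * u y := by
        rw [huΩ x (hdisj x hx)]
        simp only [sub_zero]
        refine (Finset.sum_subset (Finset.subset_univ _) ?_).symm
        intro y _ hy
        rw [huΩ y hy, mul_zero]
      have hzero : (∑ y ∈ bdry μ Ω, μ x y * u y) = 0 := by
        by_cases hxI : x ∈ bdryI μ Ω
        · have := congrFun hφ ⟨x, hxI⟩
          rw [← hTu x]
          simpa [T] using this
        · refine Finset.sum_eq_zero fun y hy => ?_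
          have : ¬ 0 < μ x y := fun hpos => hxI (by
            rw [bdryI, Finset.mem_filter]; exact ⟨hx, y, hy, hpos⟩)
          have : μ x y = 0 := le_antisymm (not_lt.1 this) (hnn x y)
          rw [this, zero_mul]
      rw [lap, hnum, hzero, zero_div]
    have hval : ∀ z : {x // x ∈ bdry μ Ω}, Λ φ z = nderiv μ Ω u z :=
      hΛ φ u hharm huB
    have hΛφ : ∀ z : {x // x ∈ bdry μ Ω}, Λ φ z = φ z := by
      intro z
      have hzΩ : (z : V) ∉ Ω := by
        have := z.2; simp only [bdry, Finset.mem_filter] at this; exact this.2.1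
      have hvm : vm μ Ω (z : V) = ∑ x ∈ Ω, μ (z : V) x := by
        rw [vm, if_neg hzΩ]
      have hvmpos : 0 < vm μ Ω (z : V) :=
        hm z (by rw [clos]; exact Finset.mem_union_right _ z.2)
      have hnum : (∑ x ∈ Ω, μ (z : V) x * (u z - u x)) = vm μ Ω (z : V) * φ z := by
        rw [hvm, Finset.sum_mul]
        refine Finset.sum_congr rfl fun x hxΩ => ?_
        rw [huB z, huΩ x (hdisj x hxΩ), sub_zero]
      rw [hval z, nderiv, hnum, mul_comm, mul_div_assoc, div_self (ne_of_gt hvmpos), mul_one]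
    funext z
    simp [LinearMap.sub_apply, hΛφ z]
  have hdim : (bdry μ Ω).card - (bdryI μ Ω).card ≤
      Module.finrank ℝ (LinearMap.ker (Λ - LinearMap.id)) := by
    have h1 := LinearMap.finrank_range_add_finrank_ker T
    have h2 : Module.finrank ℝ ({x // x ∈ bdry μ Ω} → ℝ) = (bdry μ Ω).card := by
      rw [Module.finrank_fintype_fun_eq_card, Fintype.card_coe]
    have h3 : Module.finrank ℝ (LinearMap.range T) ≤ (bdryI μ Ω).card := by
      have := (LinearMap.range T).finrank_le
      rwa [Module.finrank_fintype_fun_eq_card, Fintype.card_coe] at this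
    have h4 := Submodule.finrank_mono hle
    omega
  refine ⟨hdim, fun hlt hbot => ?_⟩
  rw [hbot, finrank_bot] at hdim
  omega
end

section
/- Let G be a finite graph with symmetric edge weights and Ω a finite subset of vertices with at least two boundary vertices and Ω̃ connected. Then the first nontrivial eigenvalue of the Dirichlet-to-Neumann operator satisfies λ_1(Ω) ≤ 2 h_E(Ω̃). -/
open scoped Classical
open Finset

variable {V : Type*} [Fintype V]

section Helpers

variable (μ : V → V → ℝ) (Ω : Finset V)

lemma edgeSum_nonneg' (hnn : ∀ x y, 0 ≤ μ x y) (F : V → V → ℝ)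
    (hF : ∀ x y, 0 ≤ F x y) : 0 ≤ edgeSum μ Ω F := by
  unfold edgeSum
  have h1 : (0:ℝ) ≤ ∑ x ∈ Ω, ∑ y ∈ Ω, μ x y * F x y :=
    Finset.sum_nonneg fun x _ => Finset.sum_nonneg fun y _ =>
      mul_nonneg (hnn x y) (hF x y)
  have h2 : (0:ℝ) ≤ ∑ x ∈ Ω, ∑ y ∈ bdry μ Ω, μ x y * F x y :=
    Finset.sum_nonneg fun x _ => Finset.sum_nonneg fun y _ =>
      mul_nonneg (hnn x y) (hF x y)
  linarith

lemma edgeSum_mono' (hnn : ∀ x y, 0 ≤ μ x y) (F G : V → V → ℝ)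
    (h : ∀ x y, F x y ≤ G x y) : edgeSum μ Ω F ≤ edgeSum μ Ω G := by
  unfold edgeSum
  have h1 : (∑ x ∈ Ω, ∑ y ∈ Ω, μ x y * F x y) ≤ ∑ x ∈ Ω, ∑ y ∈ Ω, μ x y * G x y :=
    Finset.sum_le_sum fun x _ => Finset.sum_le_sum fun y _ =>
      mul_le_mul_of_nonneg_left (h x y) (hnn x y)
  have h2 : (∑ x ∈ Ω, ∑ y ∈ bdry μ Ω, μ x y * F x y) ≤
      ∑ x ∈ Ω, ∑ y ∈ bdry μ Ω, μ x y * G x y :=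
    Finset.sum_le_sum fun x _ => Finset.sum_le_sum fun y _ =>
      mul_le_mul_of_nonneg_left (h x y) (hnn x y)
  linarith

lemma edgeSum_congr' (F G : V → V → ℝ) (h : ∀ x y, F x y = G x y) :
    edgeSum μ Ω F = edgeSum μ Ω G := by
  have : F = G := funext fun x => funext fun y => h x y
  rw [this]

lemma edgeSum_add' (F G : V → V → ℝ) :
    edgeSum μ Ω (fun x y => F x y + G x y) = edgeSum μ Ω F + edgeSum μ Ω G := by
  unfold edgeSum
  simp only [mul_add, Finset.sum_add_distrib]
  ring

lemma edgeSum_smul' (c : ℝ) (F : V → V → ℝ) :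
    edgeSum μ Ω (fun x y => c * F x y) = c * edgeSum μ Ω F := by
  unfold edgeSum
  have key : ∀ s t : Finset V, ∑ x ∈ s, ∑ y ∈ t, μ x y * (c * F x y)
      = c * ∑ x ∈ s, ∑ y ∈ t, μ x y * F x y := by
    intro s t
    rw [Finset.mul_sum]
    refine Finset.sum_congr rfl fun x _ => ?_
    rw [Finset.mul_sum]
    exact Finset.sum_congr rfl fun y _ => by ring
  rw [key, key]
  ring

lemma dirichlet_nonneg' (hnn : ∀ x y, 0 ≤ μ x y) (f : V → ℝ) :
    0 ≤ dirichlet μ Ω f :=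
  edgeSum_nonneg' μ Ω hnn _ fun x y => sq_nonneg _

lemma cut_nonneg' (hnn : ∀ x y, 0 ≤ μ x y) (A : Finset V) :
    0 ≤ cut μ Ω A :=
  edgeSum_nonneg' μ Ω hnn _ fun x y => by split_ifs <;> norm_num

lemma vm_nonneg' (hnn : ∀ x y, 0 ≤ μ x y) (x : V) : 0 ≤ vm μ Ω x := by
  unfold vm
  split_ifs
  · exact Finset.sum_nonneg fun y _ => hnn x y
  · exact Finset.sum_nonneg fun y _ => hnn x y

lemma mu_zero_of_not_clos (hsym : ∀ x y, μ x y = μ y x) (hnn : ∀ x y, 0 ≤ μ x y)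
    {x b : V} (hx : x ∈ Ω) (hb : b ∉ Ω) (hb2 : b ∉ bdry μ Ω) : μ x b = 0 := by
  by_contra h
  have hpos : 0 < μ x b := lt_of_le_of_ne (hnn x b) (Ne.symm h)
  apply hb2
  unfold bdry
  simp only [Finset.mem_filter, Finset.mem_univ, true_and]
  exact ⟨hb, x, hx, by rw [hsym]; exact hpos⟩

lemma quad_coeff_zero {C B : ℝ} (h : ∀ t : ℝ, 0 ≤ C * t ^ 2 + B * t) : B = 0 := by
  by_contra hB
  have hB2 : 0 < B ^ 2 := by positivity
  set ε : ℝ := 1 / (|C| + 1) with hεdef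
  have hεpos : 0 < ε := by positivity
  have hCε : C * ε < 1 := by
    have h1 : (|C| + 1) * ε = 1 := by
      rw [hεdef]; field_simp
    have h2 : C * ε ≤ |C| * ε :=
      mul_le_mul_of_nonneg_right (le_abs_self C) hεpos.le
    nlinarith
  have h1 := h (-(B * ε))
  have key : 0 < (1 - C * ε) * (B ^ 2 * ε) :=
    mul_pos (by linarith) (by positivity)
  nlinarith

end Helpers
section Helpers2

variable (μ : V → V → ℝ) (Ω : Finset V)

lemma edgeSum_grad (hsym : ∀ x y, μ x y = μ y x) (hnn : ∀ x y, 0 ≤ μ x y)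
    {x : V} (hx : x ∈ Ω) (w : V → ℝ) :
    edgeSum μ Ω (fun a b => (w a - w b) *
      ((if a = x then (1:ℝ) else 0) - (if b = x then (1:ℝ) else 0)))
      = ∑ y, μ x y * (w x - w y) := by
  unfold edgeSum
  have T1 : (∑ a ∈ Ω, ∑ b ∈ Ω, μ a b * ((w a - w b) *
      ((if a = x then (1:ℝ) else 0) - (if b = x then (1:ℝ) else 0))))
      = 2 * ∑ b ∈ Ω, μ x b * (w x - w b) := by
    have e1 : ∀ a b : V, μ a b * ((w a - w b) *
        ((if a = x then (1:ℝ) else 0) - (if b = x then (1:ℝ) else 0)))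
        = (if a = x then μ a b * (w a - w b) else 0)
          - (if b = x then μ a b * (w a - w b) else 0) := by
      intro a b
      split_ifs <;> ring
    simp only [e1, Finset.sum_sub_distrib]
    have s1 : (∑ a ∈ Ω, ∑ b ∈ Ω, (if a = x then μ a b * (w a - w b) else 0))
        = ∑ b ∈ Ω, μ x b * (w x - w b) := by
      have : ∀ a ∈ Ω, (∑ b ∈ Ω, (if a = x then μ a b * (w a - w b) else 0))
          = if a = x then ∑ b ∈ Ω, μ a b * (w a - w b) else 0 := by
        intro a _
        split_ifs <;> simp
      rw [Finset.sum_congr rfl this, Finset.sum_ite_eq' Ω x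
        (fun a => ∑ b ∈ Ω, μ a b * (w a - w b)), if_pos hx]
    have s2 : (∑ a ∈ Ω, ∑ b ∈ Ω, (if b = x then μ a b * (w a - w b) else 0))
        = ∑ a ∈ Ω, μ x a * (w a - w x) := by
      refine Finset.sum_congr rfl fun a _ => ?_
      rw [Finset.sum_ite_eq' Ω x (fun b => μ a b * (w a - w b)), if_pos hx, hsym]
    rw [s1, s2, ← Finset.sum_sub_distrib, Finset.mul_sum]
    exact Finset.sum_congr rfl fun b _ => by ring
  have T2 : (∑ a ∈ Ω, ∑ b ∈ bdry μ Ω, μ a b * ((w a - w b) *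
      ((if a = x then (1:ℝ) else 0) - (if b = x then (1:ℝ) else 0))))
      = ∑ b ∈ bdry μ Ω, μ x b * (w x - w b) := by
    rw [Finset.sum_comm]
    refine Finset.sum_congr rfl fun b hb => ?_
    have hbx : b ≠ x := by
      intro h
      subst h
      simp only [bdry, Finset.mem_filter, Finset.mem_univ, true_and] at hb
      exact hb.1 hx
    have e2 : ∀ a : V, μ a b * ((w a - w b) *
        ((if a = x then (1:ℝ) else 0) - (if b = x then (1:ℝ) else 0)))
        = if a = x then μ a b * (w a - w b) else 0 := by
      intro a
      rw [if_neg hbx]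
      split_ifs <;> ring
    simp only [e2]
    rw [Finset.sum_ite_eq' Ω x (fun a => μ a b * (w a - w b)), if_pos hx, hsym]
  rw [T1, T2]
  have hdisj : Disjoint Ω (bdry μ Ω) := by
    rw [Finset.disjoint_left]
    intro a ha hab
    have := (Finset.mem_filter.mp hab).2.1
    exact this ha
  have hsplit : (∑ b ∈ Ω, μ x b * (w x - w b)) + ∑ b ∈ bdry μ Ω, μ x b * (w x - w b)
      = ∑ b ∈ clos μ Ω, μ x b * (w x - w b) := by
    rw [clos, Finset.sum_union hdisj]
  have hall : (∑ b ∈ clos μ Ω, μ x b * (w x - w b)) = ∑ b, μ x b * (w x - w b) := by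
    refine Finset.sum_subset (Finset.subset_univ _) fun b _ hb => ?_
    have hb1 : b ∉ Ω := fun h => hb (Finset.mem_union_left _ h)
    have hb2 : b ∉ bdry μ Ω := fun h => hb (Finset.mem_union_right _ h)
    rw [mu_zero_of_not_clos μ Ω hsym hnn hx hb1 hb2, zero_mul]
  have h2 : (2 * ∑ b ∈ Ω, μ x b * (w x - w b)) / 2 = ∑ b ∈ Ω, μ x b * (w x - w b) := by
    ring
  rw [h2, hsplit, hall]

end Helpers2
section Helpers3

variable (μ : V → V → ℝ) (Ω : Finset V)

/-- Clamping to [-1,1] is 1-Lipschitz. -/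
lemma clamp_sq_le (u v : ℝ) :
    (max (-1) (min 1 u) - max (-1) (min 1 v)) ^ 2 ≤ (u - v) ^ 2 := by
  have h1 : |max (-1) (min 1 u) - max (-1) (min 1 v)| ≤ |min 1 u - min 1 v| := by
    rw [max_comm (-1) (min 1 u), max_comm (-1) (min 1 v)]
    exact abs_max_sub_max_le_abs _ _ _
  have h2 : |min 1 u - min 1 v| ≤ |u - v| := by
    have := abs_min_sub_min_le_max 1 u 1 v
    simpa using this
  have h3 : |max (-1) (min 1 u) - max (-1) (min 1 v)| ≤ |u - v| := h1.trans h2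
  calc (max (-1) (min 1 u) - max (-1) (min 1 v)) ^ 2
      = |max (-1) (min 1 u) - max (-1) (min 1 v)| ^ 2 := (sq_abs _).symm
    _ ≤ |u - v| ^ 2 := by
        apply pow_le_pow_left₀ (abs_nonneg _) h3
    _ = (u - v) ^ 2 := sq_abs _

lemma clamp_eq_self {u : ℝ} (h : |u| ≤ 1) : max (-1) (min 1 u) = u := by
  rw [abs_le] at h
  rw [min_eq_right h.2, max_eq_right h.1]

lemma dirichlet_continuous : Continuous fun f : V → ℝ => dirichlet μ Ω f := by
  unfold dirichlet edgeSum
  apply Continuous.add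
  · apply Continuous.div_const
    exact continuous_finset_sum _ fun x _ => continuous_finset_sum _ fun y _ =>
      continuous_const.mul (((continuous_apply x).sub (continuous_apply y)).pow 2)
  · exact continuous_finset_sum _ fun x _ => continuous_finset_sum _ fun y _ =>
      continuous_const.mul (((continuous_apply x).sub (continuous_apply y)).pow 2)

lemma exists_harmonic_min (hsym : ∀ x y, μ x y = μ y x) (hnn : ∀ x y, 0 ≤ μ x y)
    (ψ : V → ℝ) (hψ : ∀ x, |ψ x| ≤ 1) :
    ∃ w : V → ℝ, (∀ x ∈ bdry μ Ω, w x = ψ x) ∧ IsHarmonic μ Ω w ∧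
      dirichlet μ Ω w ≤ dirichlet μ Ω ψ := by
  classical
  set K : Set (V → ℝ) :=
    Set.univ.pi (fun x => if x ∈ bdry μ Ω then ({ψ x} : Set ℝ) else Set.Icc (-1) 1)
    with hKdef
  have hKc : IsCompact K := by
    apply isCompact_univ_pi
    intro x
    split_ifs
    · exact isCompact_singleton
    · exact isCompact_Icc
  have hψK : ψ ∈ K := by
    rw [hKdef, Set.mem_univ_pi]
    intro x
    split_ifs
    · exact rfl
    · exact abs_le.mp (hψ x)
  obtain ⟨w, hwK, hwmin⟩ :=
    hKc.exists_isMinOn ⟨ψ, hψK⟩ (dirichlet_continuous μ Ω).continuousOn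
  have hwbd : ∀ x ∈ bdry μ Ω, w x = ψ x := by
    intro x hx
    have := (Set.mem_univ_pi.mp hwK) x
    rw [if_pos hx] at this
    exact this
  -- w is a global minimizer among functions with the given boundary values
  have hglobal : ∀ g : V → ℝ, (∀ x ∈ bdry μ Ω, g x = ψ x) →
      dirichlet μ Ω w ≤ dirichlet μ Ω g := by
    intro g hg
    set g' : V → ℝ := fun y => max (-1) (min 1 (g y)) with hg'def
    have hg'K : g' ∈ K := by
      rw [hKdef, Set.mem_univ_pi]
      intro x
      split_ifs with hx
      · show g' x ∈ ({ψ x} : Set ℝ)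
        have : g' x = ψ x := by
          rw [hg'def]
          simp only
          rw [hg x hx]
          exact clamp_eq_self (hψ x)
        simp [this]
      · constructor
        · exact le_max_left _ _
        · exact max_le (by norm_num) (min_le_left _ _)
    have h1 : dirichlet μ Ω w ≤ dirichlet μ Ω g' := hwmin hg'K
    have h2 : dirichlet μ Ω g' ≤ dirichlet μ Ω g := by
      apply edgeSum_mono' μ Ω hnn
      intro a b
      exact clamp_sq_le (g a) (g b)
    exact h1.trans h2
  refine ⟨w, hwbd, ?_, hglobal ψ (fun x _ => rfl)⟩
  -- harmonicity
  intro x hx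
  have hxb : x ∉ bdry μ Ω := by
    simp only [bdry, Finset.mem_filter, Finset.mem_univ, true_and]
    intro h
    exact h.1 hx
  set B : ℝ := edgeSum μ Ω (fun a b => 2 * ((w a - w b) *
      ((if a = x then (1:ℝ) else 0) - (if b = x then (1:ℝ) else 0)))) with hBdef
  set C : ℝ := edgeSum μ Ω (fun a b =>
      ((if a = x then (1:ℝ) else 0) - (if b = x then (1:ℝ) else 0)) ^ 2) with hCdef
  have hquad : ∀ t : ℝ, 0 ≤ C * t ^ 2 + B * t := by
    intro t
    set g : V → ℝ := fun y => w y + t * (if y = x then (1:ℝ) else 0) with hgdef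
    have hgb : ∀ z ∈ bdry μ Ω, g z = ψ z := by
      intro z hz
      have hzx : z ≠ x := fun h => hxb (h ▸ hz)
      rw [hgdef]
      simp only [if_neg hzx, mul_zero, add_zero]
      exact hwbd z hz
    have hexp : dirichlet μ Ω g = dirichlet μ Ω w + (t * B + t * (t * C)) := by
      rw [hgdef]
      unfold dirichlet
      have e : (fun a b => ((w a + t * (if a = x then (1:ℝ) else 0)) -
            (w b + t * (if b = x then (1:ℝ) else 0))) ^ 2)
          = fun a b => (w a - w b) ^ 2 +
            (t * (2 * ((w a - w b) *
              ((if a = x then (1:ℝ) else 0) - (if b = x then (1:ℝ) else 0)))) +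
             t * (t * (((if a = x then (1:ℝ) else 0) - (if b = x then (1:ℝ) else 0)) ^ 2))) := by
        funext a b
        ring
      rw [e]
      simp only [edgeSum_add', edgeSum_smul']
      rw [hBdef, hCdef]
      simp only [edgeSum_smul']
    have hmin := hglobal g hgb
    rw [hexp] at hmin
    nlinarith
  have hB0 : B = 0 := quad_coeff_zero hquad
  have hgrad : edgeSum μ Ω (fun a b => (w a - w b) *
      ((if a = x then (1:ℝ) else 0) - (if b = x then (1:ℝ) else 0)))
      = ∑ y, μ x y * (w x - w y) := edgeSum_grad μ Ω hsym hnn hx w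
  have hB2 : B = 2 * ∑ y, μ x y * (w x - w y) := by
    rw [hBdef, edgeSum_smul', hgrad]
  have hsum0 : (∑ y, μ x y * (w x - w y)) = 0 := by
    rw [hB2] at hB0
    linarith
  have hnum : (∑ y, μ x y * (w y - w x)) = 0 := by
    have hadd : (∑ y, (μ x y * (w y - w x) + μ x y * (w x - w y))) = 0 :=
      Finset.sum_eq_zero fun y _ => by ring
    rw [Finset.sum_add_distrib, hsum0, add_zero] at hadd
    exact hadd
  unfold lap
  rw [hnum, zero_div]

end Helpers3
section Helpers4

variable (μ : V → V → ℝ) (Ω : Finset V)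

lemma dirichlet_smul' (c : ℝ) (f : V → ℝ) :
    dirichlet μ Ω (fun y => c * f y) = c ^ 2 * dirichlet μ Ω f := by
  unfold dirichlet
  have e : (fun a b => (c * f a - c * f b) ^ 2)
      = fun a b => c ^ 2 * (f a - f b) ^ 2 := by
    funext a b; ring
  rw [e, edgeSum_smul']

lemma isHarmonic_smul (c : ℝ) (f : V → ℝ) (hf : IsHarmonic μ Ω f) :
    IsHarmonic μ Ω (fun y => c * f y) := by
  intro x hx
  have h := hf x hx
  unfold lap at h ⊢
  have e : (∑ y, μ x y * (c * f y - c * f x)) = c * ∑ y, μ x y * (f y - f x) := by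
    rw [Finset.mul_sum]
    exact Finset.sum_congr rfl fun y _ => by ring
  rw [e, mul_div_assoc, h, mul_zero]

lemma dirichlet_indicator_eq_cut (A : Finset V) (c : ℝ) :
    dirichlet μ Ω (fun y => (if y ∈ A then (1:ℝ) else 0) - c) = cut μ Ω A := by
  unfold dirichlet cut
  apply edgeSum_congr'
  intro x y
  by_cases hx : x ∈ A <;> by_cases hy : y ∈ A
  · simp [hx, hy]
  · simp only []; rw [if_pos hx, if_neg hy, if_neg (by simp [hx, hy])]; ring
  · simp only []; rw [if_neg hx, if_pos hy, if_neg (by simp [hx, hy])]; ring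
  · simp [hx, hy]

end Helpers4
/-- Proposition 4.6: λ₁(Ω) ≤ 2 h_E(Ω̃). -/
theorem stmt_16 (μ : V → V → ℝ) (Ω : Finset V)
    (hsym : ∀ x y, μ x y = μ y x) (hnn : ∀ x y, 0 ≤ μ x y)
    (hconn : TilConnected μ Ω) (hcard : 2 ≤ (bdry μ Ω).card) :
    lambda1 μ Ω ≤ 2 * hE μ Ω := by
  classical
  have hbdd : BddBelow { r : ℝ | ∃ u : V → ℝ, IsHarmonic μ Ω u ∧
      (∑ x ∈ bdry μ Ω, u x ^ 2 * vm μ Ω x) = 1 ∧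
      (∑ x ∈ bdry μ Ω, u x * vm μ Ω x) = 0 ∧
      r = dirichlet μ Ω u } := by
    refine ⟨0, fun r hr => ?_⟩
    obtain ⟨u, _, _, _, hru⟩ := hr
    rw [hru]
    exact dirichlet_nonneg' μ Ω hnn u
  -- Key estimate for each admissible set A
  have key : ∀ A : Finset V, 0 < msum μ Ω (A ∩ bdry μ Ω) →
      msum μ Ω (A ∩ bdry μ Ω) ≤ msum μ Ω (bdry μ Ω) / 2 →
      lambda1 μ Ω ≤ 2 * (cut μ Ω A / msum μ Ω (A ∩ bdry μ Ω)) := by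
    intro A ha h2
    set a := msum μ Ω (A ∩ bdry μ Ω) with hadef
    set M := msum μ Ω (bdry μ Ω) with hMdef
    have hM : 0 < M := by linarith
    set c := a / M with hcdef
    have hcM : c * M = a := div_mul_cancel₀ a hM.ne'
    have hc0 : 0 ≤ c := div_nonneg ha.le hM.le
    have hchalf : c ≤ 1 / 2 := by
      rw [hcdef, div_le_iff₀ hM]
      linarith
    set ψ : V → ℝ := fun y => (if y ∈ A then (1:ℝ) else 0) - c with hψdef
    have hψ1 : ∀ y, |ψ y| ≤ 1 := by
      intro y
      rw [hψdef]
      simp only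
      split_ifs <;> rw [abs_le] <;> constructor <;> linarith
    obtain ⟨w, hwb, hwh, hwd⟩ := exists_harmonic_min μ Ω hsym hnn ψ hψ1
    -- boundary splitting
    have hsplitsum : ∀ f : V → ℝ, (∑ x ∈ bdry μ Ω, f x)
        = (∑ x ∈ A ∩ bdry μ Ω, f x) + ∑ x ∈ bdry μ Ω \ A, f x := by
      intro f
      rw [Finset.inter_comm]
      exact (Finset.sum_inter_add_sum_sdiff _ _ _).symm
    set sB := ∑ x ∈ bdry μ Ω \ A, vm μ Ω x with hsBdef
    have hMsum : M = a + sB := by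
      rw [hMdef, hadef, msum, msum, hsBdef]
      exact hsplitsum (vm μ Ω)
    have hψA : ∀ x ∈ A ∩ bdry μ Ω, ψ x = 1 - c := by
      intro x hx
      have : x ∈ A := (Finset.mem_inter.mp hx).1
      rw [hψdef]; simp [this]
    have hψB : ∀ x ∈ bdry μ Ω \ A, ψ x = -c := by
      intro x hx
      have : x ∉ A := (Finset.mem_sdiff.mp hx).2
      rw [hψdef]; simp [this]
    have hsum1 : (∑ x ∈ bdry μ Ω, ψ x * vm μ Ω x) = 0 := by
      rw [hsplitsum]
      have e1 : (∑ x ∈ A ∩ bdry μ Ω, ψ x * vm μ Ω x) = (1 - c) * a := by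
        rw [hadef, msum, Finset.mul_sum]
        exact Finset.sum_congr rfl fun x hx => by rw [hψA x hx]
      have e2 : (∑ x ∈ bdry μ Ω \ A, ψ x * vm μ Ω x) = (-c) * sB := by
        rw [hsBdef, Finset.mul_sum]
        exact Finset.sum_congr rfl fun x hx => by rw [hψB x hx]
      rw [e1, e2]
      nlinarith [hMsum, hcM]
    set N := a * (1 - c) with hNdef
    have hN : 0 < N := by
      rw [hNdef]
      apply mul_pos ha
      linarith
    have hNa : a / 2 ≤ N := by
      rw [hNdef]
      nlinarith
    have hsum2 : (∑ x ∈ bdry μ Ω, ψ x ^ 2 * vm μ Ω x) = N := by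
      rw [hsplitsum]
      have e1 : (∑ x ∈ A ∩ bdry μ Ω, ψ x ^ 2 * vm μ Ω x) = (1 - c) ^ 2 * a := by
        rw [hadef, msum, Finset.mul_sum]
        exact Finset.sum_congr rfl fun x hx => by rw [hψA x hx]
      have e2 : (∑ x ∈ bdry μ Ω \ A, ψ x ^ 2 * vm μ Ω x) = c ^ 2 * sB := by
        rw [hsBdef, Finset.mul_sum]
        refine Finset.sum_congr rfl fun x hx => ?_
        rw [hψB x hx]
        ring
      rw [e1, e2, hNdef]
      have hsB : sB = M - a := by linarith
      rw [hsB]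
      linear_combination c * hcM
    set s := Real.sqrt N with hsdef
    have hs2 : s ^ 2 = N := Real.sq_sqrt hN.le
    have hspos : 0 < s := Real.sqrt_pos.mpr hN
    set u : V → ℝ := fun y => s⁻¹ * w y with hudef
    have hu2 : (∑ x ∈ bdry μ Ω, u x ^ 2 * vm μ Ω x) = 1 := by
      have e : (∑ x ∈ bdry μ Ω, u x ^ 2 * vm μ Ω x)
          = (s⁻¹) ^ 2 * ∑ x ∈ bdry μ Ω, ψ x ^ 2 * vm μ Ω x := by
        rw [Finset.mul_sum]
        refine Finset.sum_congr rfl fun x hx => ?_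
        rw [hudef]
        simp only
        rw [hwb x hx]
        ring
      rw [e, hsum2, inv_pow, hs2, inv_mul_cancel₀ hN.ne']
    have hu1 : (∑ x ∈ bdry μ Ω, u x * vm μ Ω x) = 0 := by
      have e : (∑ x ∈ bdry μ Ω, u x * vm μ Ω x)
          = s⁻¹ * ∑ x ∈ bdry μ Ω, ψ x * vm μ Ω x := by
        rw [Finset.mul_sum]
        refine Finset.sum_congr rfl fun x hx => ?_
        rw [hudef]
        simp only
        rw [hwb x hx]
        ring
      rw [e, hsum1, mul_zero]
    have huh : IsHarmonic μ Ω u := isHarmonic_smul μ Ω s⁻¹ w hwh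
    have hmem : dirichlet μ Ω u ∈ { r : ℝ | ∃ v : V → ℝ, IsHarmonic μ Ω v ∧
        (∑ x ∈ bdry μ Ω, v x ^ 2 * vm μ Ω x) = 1 ∧
        (∑ x ∈ bdry μ Ω, v x * vm μ Ω x) = 0 ∧
        r = dirichlet μ Ω v } := ⟨u, huh, hu2, hu1, rfl⟩
    have hl1 : lambda1 μ Ω ≤ dirichlet μ Ω u := csInf_le hbdd hmem
    have hcut : dirichlet μ Ω w ≤ cut μ Ω A := by
      have := dirichlet_indicator_eq_cut μ Ω A c
      rw [hψdef] at hwd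
      rw [← this]
      exact hwd
    have hdu : dirichlet μ Ω u = (s ^ 2)⁻¹ * dirichlet μ Ω w := by
      rw [hudef, dirichlet_smul', inv_pow]
    have hstep : dirichlet μ Ω u ≤ cut μ Ω A / N := by
      rw [hdu, hs2, inv_mul_eq_div]
      exact (div_le_div_iff_of_pos_right hN).mpr hcut
    have hfin : cut μ Ω A / N ≤ 2 * (cut μ Ω A / a) := by
      have hc : 0 ≤ cut μ Ω A := cut_nonneg' μ Ω hnn A
      have h1 : cut μ Ω A / N ≤ cut μ Ω A / (a / 2) := by
        gcongr
      have h2 : cut μ Ω A / (a / 2) = 2 * (cut μ Ω A / a) := by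
        field_simp
      linarith
    linarith
  -- the defining set of hE is nonempty
  have hbne : (bdry μ Ω).Nonempty := Finset.card_pos.mp (by omega : 0 < (bdry μ Ω).card)
  obtain ⟨z, hz, hzmin⟩ := Finset.exists_min_image (bdry μ Ω) (vm μ Ω) hbne
  obtain ⟨z', hz', hzz'⟩ := Finset.exists_mem_ne (show 1 < (bdry μ Ω).card by omega) z
  have hzΩ : z ∉ Ω := by
    simp only [bdry, Finset.mem_filter, Finset.mem_univ, true_and] at hz
    exact hz.1
  have hvz : 0 < vm μ Ω z := by
    have hz2 := hz
    simp only [bdry, Finset.mem_filter, Finset.mem_univ, true_and] at hz2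
    obtain ⟨y₀, hy₀, hpos⟩ := hz2.2
    rw [vm, if_neg hzΩ]
    exact Finset.sum_pos' (fun y _ => hnn z y) ⟨y₀, hy₀, hpos⟩
  have hpair : vm μ Ω z + vm μ Ω z' ≤ msum μ Ω (bdry μ Ω) := by
    have hsub : ({z, z'} : Finset V) ⊆ bdry μ Ω := by
      intro t ht
      rcases Finset.mem_insert.mp ht with h | h
      · rwa [h]
      · rw [Finset.mem_singleton.mp h]; exact hz'
    have := Finset.sum_le_sum_of_subset_of_nonneg hsub
      (fun t _ _ => vm_nonneg' μ Ω hnn t)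
    rwa [Finset.sum_pair (Ne.symm hzz')] at this
  have hzhalf : vm μ Ω z ≤ msum μ Ω (bdry μ Ω) / 2 := by
    have := hzmin z' hz'
    linarith
  have hzmsum : msum μ Ω ({z} ∩ bdry μ Ω) = vm μ Ω z := by
    rw [Finset.singleton_inter_of_mem hz, msum, Finset.sum_singleton]
  have hmemE : cut μ Ω {z} / msum μ Ω ({z} ∩ bdry μ Ω) ∈
      { r : ℝ | ∃ A : Finset V, A ⊆ clos μ Ω ∧
        0 < msum μ Ω (A ∩ bdry μ Ω) ∧
        msum μ Ω (A ∩ bdry μ Ω) ≤ msum μ Ω (bdry μ Ω) / 2 ∧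
        r = cut μ Ω A / msum μ Ω (A ∩ bdry μ Ω) } := by
    refine ⟨{z}, ?_, ?_, ?_, rfl⟩
    · rw [Finset.singleton_subset_iff, clos]
      exact Finset.mem_union_right _ hz
    · rw [hzmsum]; exact hvz
    · rw [hzmsum]; exact hzhalf
  have h3 : lambda1 μ Ω / 2 ≤ hE μ Ω := by
    rw [hE]
    apply le_csInf ⟨_, hmemE⟩
    rintro r ⟨A, hA, h1, h2, rfl⟩
    have := key A h1 h2
    linarith
  linarith
end

section
/- Let G be a finite graph with symmetric edge weights, Ω a finite subset of vertices with Ω̃ connected and at least two boundary vertices, and let f : Ω̄ → ℝ be a harmonic extension of an eigenfunction of the Dirichlet-to-Neumann operator associated with the first nontrivial eigenvalue λ_1(Ω) (i.e., Δf = 0 on Ω and ∂f/∂n = λ_1(Ω) f on δΩ). Let Ω̄⁺ = {x ∈ Ω̄ : f(x) > 0}, δ⁺Ω = Ω̄⁺ ∩ δΩ, and let g = max(f, 0) be the positive part of f on Ω̄. If g is not identically zero on δ⁺Ω, then λ_1(Ω) ≥ ( Σ_{e={x,y} ∈ E(Ω̄⁺,Ω̄)} μ_{xy} (g(y) − g(x))²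 ) / ( Σ_{x ∈ δ⁺Ω} g(x)² m_x ), where E(Ω̄⁺,Ω̄) denotes the set of edges of E(Ω,Ω̄) with at least one endpoint in Ω̄⁺. -/
open scoped Classical
open Finset

variable {V : Type*} [Fintype V]

/-- Sum over the edges e = {x,y} of E(Ω,Ω̄) having at least one endpoint in P
of μ_{xy} · F x y (for symmetric F); used for the edge set E(Ω̄⁺,Ω̄). -/
noncomputable def edgeSumOn (μ : V → V → ℝ) (Ω : Finset V) (P : Finset V)
    (F : V → V → ℝ) : ℝ :=
  (∑ x ∈ Ω, ∑ y ∈ Ω, if x ∈ P ∨ y ∈ P then μ x y * F x y else 0) / 2 +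
    ∑ x ∈ Ω, ∑ y ∈ bdry μ Ω, if x ∈ P ∨ y ∈ P then μ x y * F x y else 0

private lemma ppart_ineq (a b : ℝ) :
    (max b 0 - max a 0) ^ 2 ≤ (a - b) * (max a 0 - max b 0) := by
  have h1 : max a 0 * (max a 0 - a) = 0 := by
    rcases le_total a 0 with h | h
    · simp [max_eq_right h]
    · simp [max_eq_left h]
  have h2 : max b 0 * (max b 0 - b) = 0 := by
    rcases le_total b 0 with h | h
    · simp [max_eq_right h]
    · simp [max_eq_left h]
  nlinarith [mul_nonneg (sub_nonneg.2 (le_max_left a 0)) (le_max_right b (0:ℝ)),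
    mul_nonneg (sub_nonneg.2 (le_max_left b 0)) (le_max_right a (0:ℝ)), h1, h2]

/-- Lemma 5.2: if f is (the harmonic extension of) an eigenfunction for the first
nontrivial DtN eigenvalue λ₁(Ω), g = max(f,0), Ω̄⁺ = {f > 0} and δ⁺Ω = Ω̄⁺ ∩ δΩ,
then λ₁(Ω) ≥ (Σ_{e={x,y}∈E(Ω̄⁺,Ω̄)} μ_{xy}(g(y) − g(x))²) / (Σ_{x∈δ⁺Ω} g(x)² m_x). -/
theorem stmt_18 (μ : V → V → ℝ) (Ω : Finset V)
    (hsym : ∀ x y, μ x y = μ y x) (hnn : ∀ x y, 0 ≤ μ x y)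
    (hconn : TilConnected μ Ω) (hcard : 2 ≤ (bdry μ Ω).card)
    (f : V → ℝ) (hharm : IsHarmonic μ Ω f)
    (heig : ∀ z ∈ bdry μ Ω, nderiv μ Ω f z = lambda1 μ Ω * f z)
    (g : V → ℝ) (hg : ∀ x, g x = max (f x) 0)
    (hne : ∃ x ∈ (clos μ Ω).filter (fun x => 0 < f x) ∩ bdry μ Ω, g x ≠ 0) :
    lambda1 μ Ω ≥
      edgeSumOn μ Ω ((clos μ Ω).filter (fun x => 0 < f x))
          (fun x y => (g y - g x) ^ 2) /
        ∑ x ∈ (clos μ Ω).filter (fun x => 0 < f x) ∩ bdry μ Ω,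
          g x ^ 2 * vm μ Ω x := by
  set B := bdry μ Ω with hB
  set P := (clos μ Ω).filter (fun x => 0 < f x) with hP
  set lam := lambda1 μ Ω with hlam
  have hBclos : B ⊆ clos μ Ω := by
    intro x hx; exact Finset.mem_union_right _ hx
  have hmB : ∀ z ∈ B, 0 < vm μ Ω z := by
    intro z hz
    have hz' := Finset.mem_filter.1 hz
    obtain ⟨hzΩ, y, hyΩ, hy⟩ := hz'.2
    have hvz : vm μ Ω z = ∑ y ∈ Ω, μ z y := by simp [vm, hzΩ]
    rw [hvz]
    exact Finset.sum_pos' (fun i _ => hnn z i) ⟨y, hyΩ, hy⟩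
  have hgnn : ∀ x, 0 ≤ g x := fun x => (hg x).symm ▸ le_max_right _ _
  have hg0 : ∀ x ∈ clos μ Ω, x ∉ P → g x = 0 := by
    intro x hx hxP
    have hfx : ¬ 0 < f x := fun h => hxP (Finset.mem_filter.2 ⟨hx, h⟩)
    rw [hg x]
    exact max_eq_right (not_lt.1 hfx)
  set S := ∑ x ∈ P ∩ B, g x ^ 2 * vm μ Ω x with hS
  have hSpos : 0 < S := by
    obtain ⟨x0, hx0, hgx0⟩ := hne
    refine Finset.sum_pos' (fun i hi => mul_nonneg (sq_nonneg _)
      (le_of_lt (hmB i (Finset.mem_of_mem_inter_right hi)))) ⟨x0, hx0, ?_⟩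
    exact mul_pos (lt_of_le_of_ne (sq_nonneg _) (Ne.symm (pow_ne_zero 2 hgx0)))
      (hmB x0 (Finset.mem_of_mem_inter_right hx0))
  -- harmonicity: numerator vanishes
  have hH : ∀ x ∈ Ω, ∑ y, μ x y * (f y - f x) = 0 := by
    intro x hx
    have h0 := hharm x hx
    simp only [lap] at h0
    rcases div_eq_zero_iff.mp h0 with h | h
    · exact h
    · have hvx : ∑ y, μ x y = 0 := by
        simpa [vm, hx] using h
      have hz : ∀ y ∈ Finset.univ, μ x y = 0 :=
        (Finset.sum_eq_zero_iff_of_nonneg (fun i _ => hnn x i)).1 hvx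
      exact Finset.sum_eq_zero fun y _ => by rw [hz y (Finset.mem_univ y), zero_mul]
  -- no edges leaving clos
  have hedge0 : ∀ x ∈ Ω, ∀ y, y ∉ Ω → y ∉ B → μ x y = 0 := by
    intro x hx y hyΩ hyB
    by_contra h
    have hpos : 0 < μ y x := by
      rw [hsym y x]; exact lt_of_le_of_ne (hnn x y) (Ne.symm h)
    exact hyB (Finset.mem_filter.2 ⟨Finset.mem_univ y, hyΩ, x, hx, hpos⟩)
  have hdisj : Disjoint Ω B := by
    rw [Finset.disjoint_left]
    intro a ha haB
    exact (Finset.mem_filter.1 haB).2.1 ha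
  have hsplit : ∀ x ∈ Ω, ∀ t : V → ℝ,
      ∑ y, μ x y * t y = ∑ y ∈ Ω, μ x y * t y + ∑ y ∈ B, μ x y * t y := by
    intro x hx t
    rw [← Finset.sum_union hdisj]
    refine (Finset.sum_subset (Finset.subset_univ _) ?_).symm
    intro y _ hy
    rw [Finset.mem_union] at hy
    push_neg at hy
    rw [hedge0 x hx y hy.1 hy.2, zero_mul]
  -- equation (†)
  have hdagger :
      (∑ x ∈ Ω, ∑ y ∈ Ω, μ x y * (g x * (f y - f x)))
        + ∑ x ∈ Ω, ∑ y ∈ B, μ x y * (g x * (f y - f x)) = 0 := by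
    have key : ∀ x ∈ Ω, ∑ y, μ x y * (g x * (f y - f x)) = 0 := by
      intro x hx
      have h1 : ∑ y, μ x y * (g x * (f y - f x))
          = g x * ∑ y, μ x y * (f y - f x) := by
        rw [Finset.mul_sum]
        exact Finset.sum_congr rfl fun y _ => by ring
      rw [h1, hH x hx, mul_zero]
    calc (∑ x ∈ Ω, ∑ y ∈ Ω, μ x y * (g x * (f y - f x)))
          + ∑ x ∈ Ω, ∑ y ∈ B, μ x y * (g x * (f y - f x))
        = ∑ x ∈ Ω, (∑ y ∈ Ω, μ x y * (g x * (f y - f x))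
            + ∑ y ∈ B, μ x y * (g x * (f y - f x))) := by
          rw [Finset.sum_add_distrib]
      _ = ∑ x ∈ Ω, ∑ y, μ x y * (g x * (f y - f x)) :=
          Finset.sum_congr rfl fun x hx => (hsplit x hx _).symm
      _ = 0 := Finset.sum_eq_zero key
  -- symmetrization
  have hswap : ∑ x ∈ Ω, ∑ y ∈ Ω, μ x y * (g x * (f y - f x))
      = ∑ x ∈ Ω, ∑ y ∈ Ω, μ x y * (g y * (f x - f y)) := by
    rw [Finset.sum_comm]
    exact Finset.sum_congr rfl fun a _ => Finset.sum_congr rfl fun b _ => by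
      rw [hsym b a]
  have hsum3 : ((∑ x ∈ Ω, ∑ y ∈ Ω, μ x y * (g x * (f y - f x)))
      + ∑ x ∈ Ω, ∑ y ∈ Ω, μ x y * (g y * (f x - f y)))
      + ∑ x ∈ Ω, ∑ y ∈ Ω, μ x y * ((f x - f y) * (g x - g y)) = 0 := by
    rw [← Finset.sum_add_distrib, ← Finset.sum_add_distrib]
    refine Finset.sum_eq_zero fun x _ => ?_
    rw [← Finset.sum_add_distrib, ← Finset.sum_add_distrib]
    exact Finset.sum_eq_zero fun y _ => by ring
  -- combine: Dirichlet form equals boundary sum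
  have hD2 : (∑ x ∈ Ω, ∑ y ∈ B, μ x y * (g x * (f y - f x)))
      + ∑ x ∈ Ω, ∑ y ∈ B, μ x y * ((f x - f y) * (g x - g y))
      = ∑ x ∈ Ω, ∑ y ∈ B, μ x y * ((f y - f x) * g y) := by
    rw [← Finset.sum_add_distrib]
    refine Finset.sum_congr rfl fun x _ => ?_
    rw [← Finset.sum_add_distrib]
    exact Finset.sum_congr rfl fun y _ => by ring
  -- boundary sum equals lam * S
  have hfg : ∀ y ∈ clos μ Ω, f y * g y = g y ^ 2 := by
    intro y hy
    rcases lt_or_ge 0 (f y) with h | h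
    · rw [hg y, max_eq_left h.le]; ring
    · rw [hg y, max_eq_right h]; ring
  have hRS : ∑ x ∈ Ω, ∑ y ∈ B, μ x y * ((f y - f x) * g y) = lam * S := by
    rw [Finset.sum_comm]
    have step1 : ∀ y ∈ B, ∑ x ∈ Ω, μ x y * ((f y - f x) * g y)
        = lam * (g y ^ 2 * vm μ Ω y) := by
      intro y hy
      have hv := (hmB y hy).ne'
      have hnum : ∑ x ∈ Ω, μ y x * (f y - f x) = nderiv μ Ω f y * vm μ Ω y := by
        rw [nderiv, div_mul_cancel₀ _ hv]
      have hre : ∑ x ∈ Ω, μ x y * ((f y - f x) * g y)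
          = (∑ x ∈ Ω, μ y x * (f y - f x)) * g y := by
        rw [Finset.sum_mul]
        exact Finset.sum_congr rfl fun x _ => by rw [hsym x y]; ring
      rw [hre, hnum, heig y hy]
      have := hfg y (hBclos hy)
      linear_combination lam * vm μ Ω y * this
    rw [Finset.sum_congr rfl step1, ← Finset.mul_sum]
    congr 1
    rw [hS]
    refine (Finset.sum_subset Finset.inter_subset_right ?_).symm
    intro y hyB hyn
    have hyP : y ∉ P := fun h => hyn (Finset.mem_inter.2 ⟨h, hyB⟩)
    rw [hg0 y (hBclos hyB) hyP]
    ring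
  -- termwise comparison
  have hterm : ∀ x ∈ Ω, ∀ y ∈ clos μ Ω,
      (if x ∈ P ∨ y ∈ P then μ x y * (g y - g x) ^ 2 else 0)
        ≤ μ x y * ((f x - f y) * (g x - g y)) := by
    intro x hx y hy
    by_cases h : x ∈ P ∨ y ∈ P
    · rw [if_pos h]
      refine mul_le_mul_of_nonneg_left ?_ (hnn x y)
      rw [hg x, hg y]
      exact ppart_ineq (f x) (f y)
    · rw [if_neg h]
      push_neg at h
      rw [hg0 x (Finset.mem_union_left _ hx) h.1, hg0 y hy h.2]
      simp
  have hE1 : (∑ x ∈ Ω, ∑ y ∈ Ω, if x ∈ P ∨ y ∈ P then μ x y * (g y - g x) ^ 2 else 0)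
      ≤ ∑ x ∈ Ω, ∑ y ∈ Ω, μ x y * ((f x - f y) * (g x - g y)) :=
    Finset.sum_le_sum fun x hx => Finset.sum_le_sum fun y hy =>
      hterm x hx y (Finset.mem_union_left _ hy)
  have hE2 : (∑ x ∈ Ω, ∑ y ∈ B, if x ∈ P ∨ y ∈ P then μ x y * (g y - g x) ^ 2 else 0)
      ≤ ∑ x ∈ Ω, ∑ y ∈ B, μ x y * ((f x - f y) * (g x - g y)) :=
    Finset.sum_le_sum fun x hx => Finset.sum_le_sum fun y hy =>
      hterm x hx y (Finset.mem_union_right _ hy)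
  have hEle : edgeSumOn μ Ω P (fun x y => (g y - g x) ^ 2) ≤ lam * S := by
    have hEdef : edgeSumOn μ Ω P (fun x y => (g y - g x) ^ 2)
        = (∑ x ∈ Ω, ∑ y ∈ Ω, if x ∈ P ∨ y ∈ P then μ x y * (g y - g x) ^ 2 else 0) / 2
          + ∑ x ∈ Ω, ∑ y ∈ B, if x ∈ P ∨ y ∈ P then μ x y * (g y - g x) ^ 2 else 0 := rfl
    rw [hEdef]
    linarith [hE1, hE2, hdagger, hswap, hsum3, hD2, hRS]
  rw [ge_iff_le, div_le_iff₀ hSpos]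
  exact hEle
end
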